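/- arXiv:1807.05844 — 3 statements merged into one kernel-verified Lean document; each statement's English description precedes it below -/
import Mathlib

section
/- If φ : ℝⁿ × ℝᵐ → ℝ is convex and for each t the function x ↦ exp(-φ(x,t)) is integrable on ℝⁿ, then the function φ̃(t) := -log ∫_{ℝⁿ} exp(-φ(x,t)) dx is convex on ℝᵐ (Prékopa's theorem). -/
open MeasureTheory

open ENNReal NNReal Set Pointwise


lemma engm {a b : ℝ} (ha : 0 ≤ a) (hb : 0 ≤ b) (hab : a + b = 1) (x y : ℝ≥0∞) :
    x ^ a * y ^ b ≤ ENNReal.ofReal a * x + ENNReal.ofReal b * y := by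
  rcases eq_or_lt_of_le ha with ha0 | ha
  · simp [← ha0, show b = 1 by linarith]
  rcases eq_or_lt_of_le hb with hb0 | hb
  · simp [← hb0, show a = 1 by linarith]
  rcases eq_or_ne x ∞ with rfl | hx
  · refine le_top.trans_eq ?_
    rw [ENNReal.mul_top (ENNReal.ofReal_pos.mpr ha).ne', top_add]
  rcases eq_or_ne y ∞ with rfl | hy
  · refine le_top.trans_eq ?_
    rw [ENNReal.mul_top (ENNReal.ofReal_pos.mpr hb).ne', add_top]
  · lift x to ℝ≥0 using hx
    lift y to ℝ≥0 using hy
    have key := NNReal.geom_mean_le_arith_mean2_weighted a.toNNReal b.toNNReal x y (by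
      rw [← Real.toNNReal_add ha.le hb.le, hab, Real.toNNReal_one])
    rw [← ENNReal.coe_rpow_of_nonneg _ ha.le, ← ENNReal.coe_rpow_of_nonneg _ hb.le,
      ← ENNReal.coe_mul]
    have h2 : (ENNReal.ofReal a) = (a.toNNReal : ℝ≥0∞) := rfl
    have h3 : (ENNReal.ofReal b) = (b.toNNReal : ℝ≥0∞) := rfl
    rw [h2, h3, ← ENNReal.coe_mul, ← ENNReal.coe_mul, ← ENNReal.coe_add, ENNReal.coe_le_coe]
    simpa [Real.coe_toNNReal _ ha.le, Real.coe_toNNReal _ hb.le] using key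

lemma enstrict {a b : ℝ} (ha : 0 < a) (hb : 0 < b) (hab : a + b = 1) {r x y : ℝ≥0∞}
    (hr : r ≠ ∞) (hx : r < x) (hy : r < y) : r < x ^ a * y ^ b := by
  have hxa : x ^ a ≠ 0 := by
    simp only [ne_eq, ENNReal.rpow_eq_zero_iff, not_or, not_and_or]
    exact ⟨Or.inl (by simpa using (lt_of_le_of_lt (zero_le : (0:ℝ≥0∞) ≤ r) hx).ne'), Or.inr (not_lt.mpr ha.le)⟩
  have hyb : y ^ b ≠ 0 := by
    simp only [ne_eq, ENNReal.rpow_eq_zero_iff, not_or, not_and_or]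
    exact ⟨Or.inl (by simpa using (lt_of_le_of_lt (zero_le : (0:ℝ≥0∞) ≤ r) hy).ne'), Or.inr (not_lt.mpr hb.le)⟩
  rcases eq_or_ne r 0 with rfl | hr0
  · exact ENNReal.mul_pos hxa hyb
  rcases eq_or_ne x ∞ with rfl | hxt
  · rw [ENNReal.top_rpow_of_pos ha, ENNReal.top_mul hyb]
    exact lt_top_iff_ne_top.mpr hr
  rcases eq_or_ne y ∞ with rfl | hyt
  · rw [ENNReal.top_rpow_of_pos hb, ENNReal.mul_top hxa]
    exact lt_top_iff_ne_top.mpr hr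
  have h1 : r = r ^ a * r ^ b := by
    rw [← ENNReal.rpow_add _ _ hr0 hr, hab, ENNReal.rpow_one]
  rw [h1]
  calc r ^ a * r ^ b < x ^ a * r ^ b := by
        refine (ENNReal.mul_lt_mul_iff_left ?_ ?_).mpr (ENNReal.rpow_lt_rpow hx ha)
        · simp only [ne_eq, ENNReal.rpow_eq_zero_iff, not_or, not_and_or]
          exact ⟨Or.inl hr0, Or.inl hr⟩
        · simp [ENNReal.rpow_eq_top_iff, hr0, hr, not_and_or, le_of_lt hb]
    _ ≤ x ^ a * y ^ b := by
        refine mul_le_mul_right (ENNReal.rpow_le_rpow hy.le hb.le) _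

lemma vol_le_vol_add {A B : Set ℝ} (hBn : B.Nonempty) : volume A ≤ volume (A + B) := by
  obtain ⟨b, hb⟩ := hBn
  have h1 : (fun x : ℝ => x + (-b)) ⁻¹' A ⊆ A + B := by
    intro x hx
    exact ⟨x + (-b), hx, b, hb, by ring⟩
  calc volume A = volume ((fun x : ℝ => x + (-b)) ⁻¹' A) :=
        (measure_preimage_add_right volume (-b) A).symm
    _ ≤ _ := measure_mono h1

lemma vol_add_ge {A B : Set ℝ} (hA : Convex ℝ A) (hB : Convex ℝ B)
    (hAn : A.Nonempty) (hBn : B.Nonempty) :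
    volume A + volume B ≤ volume (A + B) := by
  rcases eq_or_ne (volume A) ∞ with hvA | hvA
  · have := vol_le_vol_add (A := A) (B := B) hBn
    rw [hvA] at this
    simp [top_le_iff.mp this]
  rcases eq_or_ne (volume B) ∞ with hvB | hvB
  · have := vol_le_vol_add (A := B) (B := A) hAn
    rw [hvB] at this
    rw [add_comm A B, top_le_iff.mp this]
    simp
  -- A is bounded above
  have hbddA : BddAbove A := by
    by_contra hbdd
    obtain ⟨a₀, ha₀⟩ := hAn
    have : Ici a₀ ⊆ A := by
      intro t ht
      obtain ⟨y, hy, hty⟩ := not_bddAbove_iff.mp hbdd t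
      exact hA.ordConnected.out ha₀ hy ⟨ht, hty.le⟩
    exact hvA (top_le_iff.mp (le_trans (by simp [Real.volume_Ici]) (measure_mono this)))
  have hbddB : BddBelow B := by
    by_contra hbdd
    obtain ⟨b₀, hb₀⟩ := hBn
    have : Iic b₀ ⊆ B := by
      intro t ht
      obtain ⟨y, hy, hty⟩ := not_bddBelow_iff.mp hbdd t
      exact hB.ordConnected.out hy hb₀ ⟨hty.le, ht⟩
    exact hvB (top_le_iff.mp (le_trans (by simp [Real.volume_Iic]) (measure_mono this)))
  set s := sSup A with hs
  set i := sInf B with hi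
  set X := (fun x : ℝ => x + (-i)) ⁻¹' A with hX
  set Y := (fun x : ℝ => x + (-s)) ⁻¹' B with hY
  have hXm : MeasurableSet X := (measurable_add_const _) (hA.ordConnected.measurableSet)
  have hYm : MeasurableSet Y := (measurable_add_const _) (hB.ordConnected.measurableSet)
  have hclosure : X ∪ Y ⊆ closure (A + B) := by
    rintro x (hx | hx)
    · have hxA : x - i ∈ A := by simpa [sub_eq_add_neg, hX] using hx
      have hiB : i ∈ closure B := csInf_mem_closure hBn hbddB
      have : (x - i) + i ∈ (fun y => (x - i) + y) '' closure B := Set.mem_image_of_mem _ hiB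
      have h2 := (image_closure_subset_closure_image (continuous_add_left (x - i))) this
      have h3 : closure ((fun y => (x - i) + y) '' B) ⊆ closure (A + B) :=
        closure_mono (by rintro z ⟨y, hy, rfl⟩; exact ⟨x - i, hxA, y, hy, rfl⟩)
      simpa using h3 h2
    · have hxB : x - s ∈ B := by simpa [sub_eq_add_neg, hY] using hx
      have hsA : s ∈ closure A := csSup_mem_closure hAn hbddA
      have : s + (x - s) ∈ (fun y => y + (x - s)) '' closure A := Set.mem_image_of_mem _ hsA
      have h2 := (image_closure_subset_closure_image (continuous_add_right (x - s))) this
      have h3 : closure ((fun y => y + (x - s)) '' A) ⊆ closure (A + B) :=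
        closure_mono (by rintro z ⟨y, hy, rfl⟩; exact ⟨y, hy, x - s, hxB, rfl⟩)
      have h4 := h3 h2
      simpa using h4
  have hinter : X ∩ Y ⊆ {s + i} := by
    rintro x ⟨hx, hy⟩
    have hxA : x - i ∈ A := by simpa [sub_eq_add_neg, hX] using hx
    have hxB : x - s ∈ B := by simpa [sub_eq_add_neg, hY] using hy
    have h1 : x - i ≤ s := le_csSup hbddA hxA
    have h2 : i ≤ x - s := csInf_le hbddB hxB
    have : x = s + i := le_antisymm (by linarith) (by linarith)
    simp [this]
  have hvolX : volume X = volume A := measure_preimage_add_right volume (-i) A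
  have hvolY : volume Y = volume B := measure_preimage_add_right volume (-s) B
  have hunion : volume X + volume Y = volume (X ∪ Y) + volume (X ∩ Y) :=
    (measure_union_add_inter X hYm).symm
  have hXY : volume (X ∩ Y) = 0 :=
    measure_mono_null hinter (measure_singleton _)
  have hcl : volume (closure (A + B)) ≤ volume (A + B) := by
    have hsub : closure (A + B) ⊆ (A + B) ∪ frontier (A + B) := by
      intro x hx
      by_cases hxs : x ∈ A + B
      · exact Or.inl hxs
      · exact Or.inr ⟨hx, fun h => hxs (interior_subset h)⟩
    calc volume (closure (A + B)) ≤ volume (A + B) + volume (frontier (A + B)) :=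
          le_trans (measure_mono hsub) (measure_union_le _ _)
      _ = volume (A + B) := by rw [(hA.add hB).addHaar_frontier volume, add_zero]
  calc volume A + volume B = volume X + volume Y := by rw [hvolX, hvolY]
    _ = volume (X ∪ Y) + volume (X ∩ Y) := hunion
    _ = volume (X ∪ Y) := by rw [hXY, add_zero]
    _ ≤ volume (closure (A + B)) := measure_mono hclosure
    _ ≤ volume (A + B) := hcl

-- layer cake for functions bounded by 1
lemma layercake_le_one {α : Type*} [MeasurableSpace α] (μ : Measure α)
    (f : α → ℝ≥0∞) (hf : Measurable f) (hf1 : ∀ x, f x ≤ 1) :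
    ∫⁻ x, f x ∂μ = ∫⁻ t in Ioo (0:ℝ) 1, μ {x | ENNReal.ofReal t < f x} := by
  have hfx : ∀ x, f x ≠ ∞ := fun x => (lt_of_le_of_lt (hf1 x) one_lt_top).ne
  have key := lintegral_eq_lintegral_meas_lt μ (f := fun x => (f x).toReal)
    (Filter.Eventually.of_forall fun x => ENNReal.toReal_nonneg)
    (hf.ennreal_toReal.aemeasurable)
  have h1 : ∀ x, ENNReal.ofReal ((f x).toReal) = f x := fun x => ENNReal.ofReal_toReal (hfx x)
  simp only [h1] at key
  rw [key]
  have hsplit : Ioi (0:ℝ) = Ioo (0:ℝ) 1 ∪ Ici (1:ℝ) := by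
    ext t; constructor
    · intro ht; rcases lt_or_ge t 1 with h | h
      · exact Or.inl ⟨ht, h⟩
      · exact Or.inr h
    · rintro (⟨h, _⟩ | h)
      · exact h
      · exact lt_of_lt_of_le one_pos (show (1:ℝ) ≤ t from h)
  rw [hsplit, lintegral_union measurableSet_Ici (by
    rw [Set.disjoint_right]; rintro t ht ⟨_, ht2⟩; exact absurd ht (not_le.mpr ht2))]
  have hzero : ∫⁻ t in Ici (1:ℝ), μ {x | t < (f x).toReal} = 0 := by
    have : ∀ t ∈ Ici (1:ℝ), μ {x | t < (f x).toReal} = 0 := by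
      intro t ht
      convert measure_empty
      · ext x
        simp only [Set.mem_setOf_eq, Set.mem_empty_iff_false, iff_false, not_lt]
        calc (f x).toReal ≤ (1:ℝ≥0∞).toReal :=
              ENNReal.toReal_mono one_ne_top (hf1 x)
          _ = 1 := by simp
          _ ≤ t := ht
      · infer_instance
    calc ∫⁻ t in Ici (1:ℝ), μ {x | t < (f x).toReal}
        = ∫⁻ _ in Ici (1:ℝ), 0 := setLIntegral_congr_fun measurableSet_Ici
          this
      _ = 0 := lintegral_zero
  rw [hzero, add_zero]
  refine setLIntegral_congr_fun measurableSet_Ioo ?_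
  intro t ht
  dsimp only
  congr 1
  ext x
  simp only [Set.mem_setOf_eq]
  rw [ENNReal.ofReal_lt_iff_lt_toReal ht.1.le (hfx x)]

lemma pl1_norm {a b : ℝ} (ha : 0 < a) (hb : 0 < b) (hab : a + b = 1)
    (f g h : ℝ → ℝ≥0∞) (hf : Measurable f) (hg : Measurable g) (hh : Measurable h)
    (hfc : ∀ r : ℝ≥0∞, Convex ℝ {x | r < f x}) (hgc : ∀ r : ℝ≥0∞, Convex ℝ {x | r < g x})
    (hf1 : ∀ x, f x ≤ 1) (hg1 : ∀ x, g x ≤ 1)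
    (hfs : ∀ u : ℝ≥0∞, u < 1 → ∃ x, u < f x) (hgs : ∀ u : ℝ≥0∞, u < 1 → ∃ x, u < g x)
    (hyp : ∀ x y, f x ^ a * g y ^ b ≤ h (a * x + b * y)) :
    (ENNReal.ofReal a * ∫⁻ x, f x) + ENNReal.ofReal b * ∫⁻ x, g x ≤ ∫⁻ x, h x := by
  have hmin : ∀ x, min (h x) 1 ≤ h x := fun x => min_le_left _ _
  have key1 : ∫⁻ x, min (h x) 1 ∂volume = ∫⁻ t in Ioo (0:ℝ) 1, volume {x | ENNReal.ofReal t < min (h x) 1} :=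
    layercake_le_one volume _ (hh.min measurable_const) (fun x => min_le_right _ _)
  have hsets : ∀ t ∈ Ioo (0:ℝ) 1, {x | ENNReal.ofReal t < min (h x) 1} = {x | ENNReal.ofReal t < h x} := by
    intro t ht
    ext x
    simp only [Set.mem_setOf_eq, lt_min_iff, and_iff_left_iff_imp]
    exact fun _ => ENNReal.ofReal_lt_one.mpr ht.2
  -- pointwise inequality on levels
  have hlevel : ∀ t ∈ Ioo (0:ℝ) 1,
      ENNReal.ofReal a * volume {x | ENNReal.ofReal t < f x}
        + ENNReal.ofReal b * volume {x | ENNReal.ofReal t < g x}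
      ≤ volume {x | ENNReal.ofReal t < h x} := by
    intro t ht
    set r : ℝ≥0∞ := ENNReal.ofReal t with hr
    have hrlt1 : r < 1 := ENNReal.ofReal_lt_one.mpr ht.2
    have hrne : r ≠ ∞ := ENNReal.ofReal_ne_top
    set A := {x | r < f x} with hA
    set B := {x | r < g x} with hB
    have hAn : A.Nonempty := hfs r hrlt1
    have hBn : B.Nonempty := hgs r hrlt1
    have hsub : a • A + b • B ⊆ {x | r < h x} := by
      rintro z ⟨u, ⟨x, hx, rfl⟩, v, ⟨y, hy, rfl⟩, rfl⟩
      have := enstrict ha hb hab hrne hx hy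
      exact lt_of_lt_of_le this ((hyp x y).trans (le_of_eq (by norm_num [smul_eq_mul])))
    calc ENNReal.ofReal a * volume A + ENNReal.ofReal b * volume B
        = volume (a • A) + volume (b • B) := by
          rw [Measure.addHaar_smul_of_nonneg volume ha.le A,
            Measure.addHaar_smul_of_nonneg volume hb.le B]
          norm_num
      _ ≤ volume (a • A + b • B) :=
          vol_add_ge ((hfc r).smul a) ((hgc r).smul b) (hAn.smul_set) (hBn.smul_set)
      _ ≤ volume {x | r < h x} := measure_mono hsub
  -- put things together
  have hmono1 : ∫⁻ t in Ioo (0:ℝ) 1,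
      (ENNReal.ofReal a * volume {x | ENNReal.ofReal t < f x}
        + ENNReal.ofReal b * volume {x | ENNReal.ofReal t < g x})
      ≤ ∫⁻ t in Ioo (0:ℝ) 1, volume {x | ENNReal.ofReal t < h x} := by
    refine setLIntegral_mono' measurableSet_Ioo hlevel
  have hmeasf : Measurable fun t : ℝ => volume {x | ENNReal.ofReal t < f x} := by
    have : Antitone fun t : ℝ => volume {x | ENNReal.ofReal t < f x} :=
      fun s t hst => measure_mono (fun x hx => lt_of_le_of_lt (ENNReal.ofReal_le_ofReal hst) hx)
    exact this.measurable
  have hmeasg : Measurable fun t : ℝ => volume {x | ENNReal.ofReal t < g x} := by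
    have : Antitone fun t : ℝ => volume {x | ENNReal.ofReal t < g x} :=
      fun s t hst => measure_mono (fun x hx => lt_of_le_of_lt (ENNReal.ofReal_le_ofReal hst) hx)
    exact this.measurable
  have hadd : ∫⁻ t in Ioo (0:ℝ) 1,
      (ENNReal.ofReal a * volume {x | ENNReal.ofReal t < f x}
        + ENNReal.ofReal b * volume {x | ENNReal.ofReal t < g x})
      = (ENNReal.ofReal a * ∫⁻ x, f x) + ENNReal.ofReal b * ∫⁻ x, g x := by
    have e1 : ∫⁻ t in Ioo (0:ℝ) 1, ENNReal.ofReal a * volume {x | ENNReal.ofReal t < f x}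
        = ENNReal.ofReal a * ∫⁻ x, f x := by
      rw [lintegral_const_mul _ hmeasf, ← layercake_le_one volume f hf hf1]
    have e2 : ∫⁻ t in Ioo (0:ℝ) 1, ENNReal.ofReal b * volume {x | ENNReal.ofReal t < g x}
        = ENNReal.ofReal b * ∫⁻ x, g x := by
      rw [lintegral_const_mul _ hmeasg, ← layercake_le_one volume g hg hg1]
    rw [lintegral_add_left (hmeasf.const_mul _), e1, e2]
  calc (ENNReal.ofReal a * ∫⁻ x, f x) + ENNReal.ofReal b * ∫⁻ x, g x
      = ∫⁻ t in Ioo (0:ℝ) 1,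
        (ENNReal.ofReal a * volume {x | ENNReal.ofReal t < f x}
          + ENNReal.ofReal b * volume {x | ENNReal.ofReal t < g x}) := hadd.symm
    _ ≤ ∫⁻ t in Ioo (0:ℝ) 1, volume {x | ENNReal.ofReal t < h x} := hmono1
    _ = ∫⁻ t in Ioo (0:ℝ) 1, volume {x | ENNReal.ofReal t < min (h x) 1} := by
        refine (setLIntegral_congr_fun measurableSet_Ioo
          (fun ⦃t⦄ ht => ?_)).symm
        rw [hsets t ht]
    _ = ∫⁻ x, min (h x) 1 := key1.symm
    _ ≤ ∫⁻ x, h x := lintegral_mono hmin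

lemma mono_iSup_mul {u v : ℕ → ℝ≥0∞} (hu : Monotone u) (hv : Monotone v) :
    (⨆ n, u n) * ⨆ n, v n = ⨆ n, u n * v n := by
  rw [ENNReal.iSup_mul]
  simp_rw [ENNReal.mul_iSup]
  apply le_antisymm
  · refine iSup_le fun n => iSup_le fun m => le_iSup_of_le (max n m) ?_
    exact mul_le_mul' (hu (le_max_left n m)) (hv (le_max_right n m))
  · exact iSup_le fun n => le_iSup_of_le n (le_iSup_of_le n le_rfl)

lemma mono_iSup_rpow {u : ℕ → ℝ≥0∞} {a : ℝ} (ha : 0 < a) :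
    (⨆ n, u n) ^ a = ⨆ n, u n ^ a := by
  apply le_antisymm
  · have h2 : (⨆ n, u n) ≤ (⨆ m, u m ^ a) ^ (1/a) := by
      refine iSup_le fun n => ?_
      have h1 : u n = (u n ^ a) ^ (1/a) := by
        rw [← ENNReal.rpow_mul, mul_one_div_cancel ha.ne', ENNReal.rpow_one]
      rw [h1]
      exact ENNReal.rpow_le_rpow (le_iSup (fun m => u m ^ a) n) (by positivity)
    calc (⨆ n, u n) ^ a ≤ ((⨆ m, u m ^ a) ^ (1/a)) ^ a := ENNReal.rpow_le_rpow h2 ha.le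
      _ = ⨆ m, u m ^ a := by
        rw [← ENNReal.rpow_mul, one_div, inv_mul_cancel₀ ha.ne', ENNReal.rpow_one]
  · exact iSup_le fun n => ENNReal.rpow_le_rpow (le_iSup u n) ha.le

lemma pl_dim1 {a b : ℝ} (ha : 0 < a) (hb : 0 < b) (hab : a + b = 1)
    (f g h : ℝ → ℝ≥0∞) (hf : Measurable f) (hg : Measurable g) (hh : Measurable h)
    (hfc : ∀ r : ℝ≥0∞, Convex ℝ {x | r < f x}) (hgc : ∀ r : ℝ≥0∞, Convex ℝ {x | r < g x})
    (hyp : ∀ x y, f x ^ a * g y ^ b ≤ h (a * x + b * y)) :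
    (∫⁻ x, f x) ^ a * (∫⁻ x, g x) ^ b ≤ ∫⁻ x, h x := by
  -- truncated versions
  have key : ∀ n : ℕ, (∫⁻ x, min (f x) n) ^ a * (∫⁻ x, min (g x) n) ^ b ≤ ∫⁻ x, h x := by
    intro n
    set f' := fun x => min (f x) (n : ℝ≥0∞) with hf'
    set g' := fun x => min (g x) (n : ℝ≥0∞) with hg'
    have hf'm : Measurable f' := hf.min measurable_const
    have hg'm : Measurable g' := hg.min measurable_const
    have hf'le : ∀ x, f' x ≤ f x := fun x => min_le_left _ _
    have hg'le : ∀ x, g' x ≤ g x := fun x => min_le_left _ _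
    have hf'c : ∀ r : ℝ≥0∞, Convex ℝ {x | r < f' x} := by
      intro r
      intro x hx y hy p q hp hq hpq
      have h1 : r < f x ∧ r < n := by simpa [hf', lt_min_iff] using hx
      have h2 : r < f y ∧ r < n := by simpa [hf', lt_min_iff] using hy
      have := hfc r h1.1 h2.1 hp hq hpq
      simp only [Set.mem_setOf_eq, hf', lt_min_iff]
      exact ⟨this, h1.2⟩
    have hg'c : ∀ r : ℝ≥0∞, Convex ℝ {x | r < g' x} := by
      intro r
      intro x hx y hy p q hp hq hpq
      have h1 : r < g x ∧ r < n := by simpa [hg', lt_min_iff] using hx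
      have h2 : r < g y ∧ r < n := by simpa [hg', lt_min_iff] using hy
      have := hgc r h1.1 h2.1 hp hq hpq
      simp only [Set.mem_setOf_eq, hg', lt_min_iff]
      exact ⟨this, h1.2⟩
    set Mf := ⨆ x, f' x with hMf
    set Mg := ⨆ x, g' x with hMg
    rcases eq_or_ne Mf 0 with hMf0 | hMf0
    · have : ∀ x, f' x = 0 := fun x => le_antisymm (hMf0 ▸ le_iSup f' x) zero_le
      rw [show f' = fun _ => 0 from funext this, lintegral_const 0]
      simp [ENNReal.zero_rpow_of_pos ha]
    rcases eq_or_ne Mg 0 with hMg0 | hMg0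
    · have : ∀ x, g' x = 0 := fun x => le_antisymm (hMg0 ▸ le_iSup g' x) zero_le
      rw [show g' = fun _ => 0 from funext this, lintegral_const 0]
      simp [ENNReal.zero_rpow_of_pos hb]
    have hMft : Mf ≠ ∞ :=
      ((iSup_le fun x => min_le_right _ _ : Mf ≤ (n : ℝ≥0∞)).trans_lt
        (ENNReal.natCast_lt_top n)).ne
    have hMgt : Mg ≠ ∞ :=
      ((iSup_le fun x => min_le_right _ _ : Mg ≤ (n : ℝ≥0∞)).trans_lt
        (ENNReal.natCast_lt_top n)).ne
    set M := Mf ^ a * Mg ^ b with hM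
    have hMfa0 : Mf ^ a ≠ 0 := by simp [ENNReal.rpow_eq_zero_iff, hMf0, hMft, not_and_or]
    have hMgb0 : Mg ^ b ≠ 0 := by simp [ENNReal.rpow_eq_zero_iff, hMg0, hMgt, not_and_or]
    have hMfat : Mf ^ a ≠ ∞ := by
      simp [ENNReal.rpow_eq_top_iff, hMf0, hMft, not_and_or, not_lt, ha.le]
    have hMgbt : Mg ^ b ≠ ∞ := by
      simp [ENNReal.rpow_eq_top_iff, hMg0, hMgt, not_and_or, not_lt, hb.le]
    have hM0 : M ≠ 0 := mul_ne_zero hMfa0 hMgb0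
    have hMt : M ≠ ∞ := ENNReal.mul_ne_top hMfat hMgbt
    set F := fun x => Mf⁻¹ * f' x with hF
    set G := fun x => Mg⁻¹ * g' x with hG
    set H := fun x => M⁻¹ * h x with hH
    have hifff : ∀ (r y : ℝ≥0∞), (r < Mf⁻¹ * y ↔ Mf * r < y) := by
      intro r y
      rw [← ENNReal.mul_lt_mul_iff_right (a := Mf) (b := r) (c := Mf⁻¹ * y) hMf0 hMft, ← mul_assoc,
        ENNReal.mul_inv_cancel hMf0 hMft, one_mul]
    have hiffg : ∀ (r y : ℝ≥0∞), (r < Mg⁻¹ * y ↔ Mg * r < y) := by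
      intro r y
      rw [← ENNReal.mul_lt_mul_iff_right (a := Mg) (b := r) (c := Mg⁻¹ * y) hMg0 hMgt, ← mul_assoc,
        ENNReal.mul_inv_cancel hMg0 hMgt, one_mul]
    have hFc : ∀ r : ℝ≥0∞, Convex ℝ {x | r < F x} := by
      intro r
      have : {x | r < F x} = {x | Mf * r < f' x} := by
        ext x; exact hifff r (f' x)
      rw [this]; exact hf'c (Mf * r)
    have hGc : ∀ r : ℝ≥0∞, Convex ℝ {x | r < G x} := by
      intro r
      have : {x | r < G x} = {x | Mg * r < g' x} := by
        ext x; exact hiffg r (g' x)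
      rw [this]; exact hg'c (Mg * r)
    have hF1 : ∀ x, F x ≤ 1 := fun x => by
      calc Mf⁻¹ * f' x ≤ Mf⁻¹ * Mf := mul_le_mul_right (le_iSup f' x) _
        _ = 1 := ENNReal.inv_mul_cancel hMf0 hMft
    have hG1 : ∀ x, G x ≤ 1 := fun x => by
      calc Mg⁻¹ * g' x ≤ Mg⁻¹ * Mg := mul_le_mul_right (le_iSup g' x) _
        _ = 1 := ENNReal.inv_mul_cancel hMg0 hMgt
    have hFs : ∀ u : ℝ≥0∞, u < 1 → ∃ x, u < F x := by
      intro u hu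
      have h1 : Mf * u < Mf := by
        calc Mf * u < Mf * 1 := (ENNReal.mul_lt_mul_iff_right hMf0 hMft).mpr hu
          _ = Mf := mul_one Mf
      obtain ⟨x, hx⟩ := lt_iSup_iff.mp h1
      exact ⟨x, (hifff u (f' x)).mpr hx⟩
    have hGs : ∀ u : ℝ≥0∞, u < 1 → ∃ x, u < G x := by
      intro u hu
      have h1 : Mg * u < Mg := by
        calc Mg * u < Mg * 1 := (ENNReal.mul_lt_mul_iff_right hMg0 hMgt).mpr hu
          _ = Mg := mul_one Mg
      obtain ⟨x, hx⟩ := lt_iSup_iff.mp h1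
      exact ⟨x, (hiffg u (g' x)).mpr hx⟩
    have hinvsplit : M⁻¹ = (Mf⁻¹) ^ a * (Mg⁻¹) ^ b := by
      rw [hM, ENNReal.mul_inv (Or.inl hMfa0) (Or.inl hMfat),
        ← ENNReal.inv_rpow, ← ENNReal.inv_rpow]
    have hypFGH : ∀ x y, F x ^ a * G y ^ b ≤ H (a * x + b * y) := by
      intro x y
      calc F x ^ a * G y ^ b
          = ((Mf⁻¹) ^ a * (Mg⁻¹) ^ b) * ((f' x) ^ a * (g' y) ^ b) := by
            rw [hF, hG]
            rw [ENNReal.mul_rpow_of_nonneg _ _ ha.le, ENNReal.mul_rpow_of_nonneg _ _ hb.le]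
            ring
        _ = M⁻¹ * ((f' x) ^ a * (g' y) ^ b) := by rw [hinvsplit]
        _ ≤ M⁻¹ * ((f x) ^ a * (g y) ^ b) := by
            refine mul_le_mul_right (mul_le_mul' ?_ ?_) _
            · exact ENNReal.rpow_le_rpow (hf'le x) ha.le
            · exact ENNReal.rpow_le_rpow (hg'le y) hb.le
        _ ≤ M⁻¹ * h (a * x + b * y) := mul_le_mul_right (hyp x y) _
        _ = H (a * x + b * y) := rfl
    have main := pl1_norm ha hb hab F G H (hf'm.const_mul _) (hg'm.const_mul _)
      (hh.const_mul _) hFc hGc hF1 hG1 hFs hGs hypFGH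
    rw [hF, hG, hH] at main
    rw [lintegral_const_mul _ hf'm, lintegral_const_mul _ hg'm, lintegral_const_mul _ hh] at main
    -- now main : ofReal a * (Mf⁻¹ * ∫f') + ofReal b * (Mg⁻¹ * ∫g') ≤ M⁻¹ * ∫h
    have cancelf : Mf * (Mf⁻¹ * ∫⁻ x, f' x) = ∫⁻ x, f' x := by
      rw [← mul_assoc, ENNReal.mul_inv_cancel hMf0 hMft, one_mul]
    have cancelg : Mg * (Mg⁻¹ * ∫⁻ x, g' x) = ∫⁻ x, g' x := by
      rw [← mul_assoc, ENNReal.mul_inv_cancel hMg0 hMgt, one_mul]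
    calc (∫⁻ x, f' x) ^ a * (∫⁻ x, g' x) ^ b
        = (Mf * (Mf⁻¹ * ∫⁻ x, f' x)) ^ a * (Mg * (Mg⁻¹ * ∫⁻ x, g' x)) ^ b := by
          rw [cancelf, cancelg]
      _ = M * ((Mf⁻¹ * ∫⁻ x, f' x) ^ a * (Mg⁻¹ * ∫⁻ x, g' x) ^ b) := by
          rw [ENNReal.mul_rpow_of_nonneg _ _ ha.le, ENNReal.mul_rpow_of_nonneg _ _ hb.le, hM]
          ring
      _ ≤ M * (ENNReal.ofReal a * (Mf⁻¹ * ∫⁻ x, f' x) + ENNReal.ofReal b * (Mg⁻¹ * ∫⁻ x, g' x)) :=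
          mul_le_mul_right (engm ha.le hb.le hab _ _) _
      _ ≤ M * (M⁻¹ * ∫⁻ x, h x) := mul_le_mul_right main _
      _ = ∫⁻ x, h x := by rw [← mul_assoc, ENNReal.mul_inv_cancel hM0 hMt, one_mul]
  -- limit argument
  have hfsup : ∀ x : ℝ, (⨆ n : ℕ, min (f x) n) = f x := by
    intro x
    rw [← inf_iSup_eq]
    simp [ENNReal.iSup_natCast]
  have hgsup : ∀ x : ℝ, (⨆ n : ℕ, min (g x) n) = g x := by
    intro x
    rw [← inf_iSup_eq]
    simp [ENNReal.iSup_natCast]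
  have hmonof : Monotone fun n : ℕ => fun x => min (f x) (n : ℝ≥0∞) := by
    intro n m hnm
    exact fun x => min_le_min le_rfl (by exact_mod_cast Nat.cast_le.mpr hnm)
  have hmonog : Monotone fun n : ℕ => fun x => min (g x) (n : ℝ≥0∞) := by
    intro n m hnm
    exact fun x => min_le_min le_rfl (by exact_mod_cast Nat.cast_le.mpr hnm)
  have hintf : (∫⁻ x, f x) = ⨆ n : ℕ, ∫⁻ x, min (f x) n := by
    rw [← lintegral_iSup (fun n => hf.min measurable_const) hmonof]
    congr 1
    ext x
    exact (hfsup x).symm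
  have hintg : (∫⁻ x, g x) = ⨆ n : ℕ, ∫⁻ x, min (g x) n := by
    rw [← lintegral_iSup (fun n => hg.min measurable_const) hmonog]
    congr 1
    ext x
    exact (hgsup x).symm
  have hmono2 : Monotone fun n : ℕ => ∫⁻ x, min (f x) (n : ℝ≥0∞) :=
    fun n m hnm => lintegral_mono (hmonof hnm)
  have hmono3 : Monotone fun n : ℕ => ∫⁻ x, min (g x) (n : ℝ≥0∞) :=
    fun n m hnm => lintegral_mono (hmonog hnm)
  rw [hintf, hintg, mono_iSup_rpow ha, mono_iSup_rpow hb,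
    mono_iSup_mul (fun n m hnm => ENNReal.rpow_le_rpow (hmono2 hnm) ha.le)
      (fun n m hnm => ENNReal.rpow_le_rpow (hmono3 hnm) hb.le)]
  exact iSup_le key

def IsLC {E : Type*} [AddCommMonoid E] [SMul ℝ E] (f : E → ℝ≥0∞) : Prop :=
  ∀ ⦃p q : ℝ⦄, 0 < p → 0 < q → p + q = 1 → ∀ x y, f x ^ p * f y ^ q ≤ f (p • x + q • y)

lemma IsLC.convex_superlevel {E : Type*} [AddCommGroup E] [Module ℝ E] {f : E → ℝ≥0∞}
    (hf : IsLC f) (r : ℝ≥0∞) : Convex ℝ {x | r < f x} := by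
  rcases eq_or_ne r ∞ with rfl | hr
  · have : {x | (∞ : ℝ≥0∞) < f x} = ∅ := by
      ext x; simp [(le_top : f x ≤ ∞).not_gt]
    rw [this]; exact convex_empty
  intro x hx y hy p q hp hq hpq
  rcases eq_or_lt_of_le hp with hp0 | hp0
  · have : q = 1 := by linarith
    simp only [← hp0, this, zero_smul, one_smul, zero_add]
    exact hy
  rcases eq_or_lt_of_le hq with hq0 | hq0
  · have : p = 1 := by linarith
    simp only [← hq0, this, zero_smul, one_smul, add_zero]
    exact hx
  exact lt_of_lt_of_le (enstrict hp0 hq0 hpq hr hx hy) (hf hp0 hq0 hpq x y)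

lemma cons_smul_add {k : ℕ} (p q s u : ℝ) (x y : Fin k → ℝ) :
    (Fin.cons (p * s + q * u) (p • x + q • y) : Fin (k+1) → ℝ)
      = p • (Fin.cons s x : Fin (k+1) → ℝ) + q • (Fin.cons u y : Fin (k+1) → ℝ) := by
  funext i
  refine Fin.cases ?_ (fun j => ?_) i <;>
    simp [Pi.smul_apply, smul_eq_mul]

theorem pl_dim (k : ℕ) : ∀ {a b : ℝ}, 0 < a → 0 < b → a + b = 1 →
    ∀ f g h : (Fin k → ℝ) → ℝ≥0∞, Measurable f → Measurable g → Measurable h →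
    IsLC f → IsLC g →
    (∀ x y, f x ^ a * g y ^ b ≤ h (a • x + b • y)) →
    (∫⁻ x, f x) ^ a * (∫⁻ x, g x) ^ b ≤ ∫⁻ x, h x := by
  induction k with
  | zero =>
    intro a b ha hb hab f g h hf hg hh hflc hglc hyp
    have huniv : (volume : Measure (Fin 0 → ℝ)) Set.univ = 1 := by
      rw [MeasureTheory.volume_pi, Measure.pi_univ]
      simp
    have hint : ∀ F : (Fin 0 → ℝ) → ℝ≥0∞, ∫⁻ x, F x = F default := by
      intro F
      rw [lintegral_unique, huniv, mul_one]
      exact congrArg F (Subsingleton.elim _ _)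
    rw [hint f, hint g, hint h]
    have := hyp default default
    rwa [Subsingleton.elim (a • default + b • default) (default : Fin 0 → ℝ)] at this
  | succ k IH =>
    intro a b ha hb hab f g h hf hg hh hflc hglc hyp
    set e := MeasurableEquiv.piFinSuccAbove (fun _ : Fin (k+1) => ℝ) 0 with he
    set c : ℝ × (Fin k → ℝ) → (Fin (k+1) → ℝ) := fun p => Fin.cons p.1 p.2 with hcdef
    have hcons : (⇑e.symm : ℝ × (Fin k → ℝ) → _) = c := by
      funext p
      simp [he, hcdef, MeasurableEquiv.piFinSuccAbove, Fin.insertNthEquiv, Fin.insertNth_zero']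
    have hc : Measurable c := hcons ▸ e.symm.measurable
    have hmp : MeasurePreserving c (volume.prod volume) volume := by
      have h1 := (volume_preserving_piFinSuccAbove (fun _ : Fin (k+1) => ℝ) 0).symm e
      rwa [hcons] at h1
    have slice_meas : ∀ (F : (Fin (k+1) → ℝ) → ℝ≥0∞), Measurable F →
        ∀ x' : Fin k → ℝ, Measurable fun s : ℝ => F (Fin.cons s x') := by
      intro F hF x'
      exact (hF.comp hc).comp (measurable_id.prodMk measurable_const)
    have slice_convex : ∀ {S : Set (Fin (k+1) → ℝ)}, Convex ℝ S → ∀ x' : Fin k → ℝ,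
        Convex ℝ {s : ℝ | Fin.cons s x' ∈ S} := by
      intro S hS x'
      intro s hs u hu p q hp hq hpq
      have key : (Fin.cons (p • s + q • u) x' : Fin (k+1) → ℝ)
          = p • (Fin.cons s x' : Fin (k+1) → ℝ) + q • (Fin.cons u x' : Fin (k+1) → ℝ) := by
        have h0 := cons_smul_add p q s u x' x'
        rw [Convex.combo_self hpq x'] at h0
        simpa [smul_eq_mul] using h0
      show Fin.cons (p • s + q • u) x' ∈ S
      rw [key]
      exact hS hs hu hp hq hpq
    -- marginals
    set F : (Fin k → ℝ) → ℝ≥0∞ := fun x' => ∫⁻ s : ℝ, f (Fin.cons s x') with hFdef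
    set G : (Fin k → ℝ) → ℝ≥0∞ := fun x' => ∫⁻ s : ℝ, g (Fin.cons s x') with hGdef
    set H : (Fin k → ℝ) → ℝ≥0∞ := fun x' => ∫⁻ s : ℝ, h (Fin.cons s x') with hHdef
    have marg_meas : ∀ (P : (Fin (k+1) → ℝ) → ℝ≥0∞), Measurable P →
        Measurable fun x' : Fin k → ℝ => ∫⁻ s : ℝ, P (Fin.cons s x') := by
      intro P hP
      have : Measurable (Function.uncurry fun (x' : Fin k → ℝ) (s : ℝ) => P (Fin.cons s x')) := by
        exact (hP.comp hc).comp measurable_swap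
      exact this.lintegral_prod_right
    have hFm := marg_meas f hf
    have hGm := marg_meas g hg
    have hHm := marg_meas h hh
    -- key cross inequality via 1-d PL
    have cross : ∀ {p q : ℝ}, 0 < p → 0 < q → p + q = 1 →
        ∀ (P Q R : (Fin (k+1) → ℝ) → ℝ≥0∞), Measurable P → Measurable Q → Measurable R →
        IsLC P → IsLC Q →
        (∀ x y, P x ^ p * Q y ^ q ≤ R (p • x + q • y)) →
        ∀ x' y' : Fin k → ℝ,
          (∫⁻ s : ℝ, P (Fin.cons s x')) ^ p * (∫⁻ s : ℝ, Q (Fin.cons s y')) ^ q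
            ≤ ∫⁻ s : ℝ, R (Fin.cons s (p • x' + q • y')) := by
      intro p q hp hq hpq P Q R hP hQ hR hPlc hQlc hyp' x' y'
      refine pl_dim1 hp hq hpq _ _ _ (slice_meas P hP x') (slice_meas Q hQ y')
        (slice_meas R hR _) (fun r => slice_convex (hPlc.convex_superlevel r) x')
        (fun r => slice_convex (hQlc.convex_superlevel r) y') ?_
      intro s u
      have h1 := hyp' (Fin.cons s x') (Fin.cons u y')
      rwa [← cons_smul_add] at h1
    have hFlc : IsLC F := fun p q hp hq hpq x' y' =>
      cross hp hq hpq f f f hf hf hf hflc hflc (fun x y => hflc hp hq hpq x y) x' y'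
    have hGlc : IsLC G := fun p q hp hq hpq x' y' =>
      cross hp hq hpq g g g hg hg hg hglc hglc (fun x y => hglc hp hq hpq x y) x' y'
    have hFGH : ∀ x' y', F x' ^ a * G y' ^ b ≤ H (a • x' + b • y') :=
      cross ha hb hab f g h hf hg hh hflc hglc hyp
    have main := IH ha hb hab F G H hFm hGm hHm hFlc hGlc hFGH
    -- identify integrals
    have marg_int : ∀ (P : (Fin (k+1) → ℝ) → ℝ≥0∞), Measurable P →
        ∫⁻ x, P x = ∫⁻ x' : Fin k → ℝ, ∫⁻ s : ℝ, P (Fin.cons s x') := by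
      intro P hP
      rw [← hmp.lintegral_comp hP]
      exact lintegral_prod_symm' _ (hP.comp hc)
    rw [marg_int f hf, marg_int g hg, marg_int h hh]
    exact main

lemma keyexp {a b u v w : ℝ} (ha : 0 < a) (hb : 0 < b) (h : w ≤ a * u + b * v) :
    ENNReal.ofReal (Real.exp (-u)) ^ a * ENNReal.ofReal (Real.exp (-v)) ^ b
      ≤ ENNReal.ofReal (Real.exp (-w)) := by
  rw [ENNReal.ofReal_rpow_of_pos (Real.exp_pos _), ENNReal.ofReal_rpow_of_pos (Real.exp_pos _),
    ← ENNReal.ofReal_mul (by positivity), ← Real.exp_mul, ← Real.exp_mul, ← Real.exp_add]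
  exact ENNReal.ofReal_le_ofReal (Real.exp_le_exp.mpr (by nlinarith))

/-- **Prékopa's theorem.** If `φ : ℝⁿ × ℝᵐ → ℝ` is (jointly) convex and for each `t`
the function `x ↦ exp (-φ (x, t))` is integrable on `ℝⁿ`, then
`t ↦ -log ∫ exp (-φ (x, t)) dx` is convex on `ℝᵐ`. -/
theorem prekopa (n m : ℕ) (φ : (Fin n → ℝ) × (Fin m → ℝ) → ℝ)
    (hφ : ConvexOn ℝ Set.univ φ)
    (hint : ∀ t : Fin m → ℝ, Integrable (fun x : Fin n → ℝ => Real.exp (-φ (x, t)))) :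
    ConvexOn ℝ Set.univ
      (fun t : Fin m → ℝ => -Real.log (∫ x : Fin n → ℝ, Real.exp (-φ (x, t)))) := by
  have hφcont : Continuous φ := by
    have := hφ.continuousOn isOpen_univ
    rw [← continuousOn_univ]
    exact this
  set I : (Fin m → ℝ) → ℝ := fun t => ∫ x : Fin n → ℝ, Real.exp (-φ (x, t)) with hI
  set J : (Fin m → ℝ) → ℝ≥0∞ :=
    fun t => ∫⁻ x : Fin n → ℝ, ENNReal.ofReal (Real.exp (-φ (x, t))) with hJ
  have hIJ : ∀ t, ENNReal.ofReal (I t) = J t := fun t =>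
    ofReal_integral_eq_lintegral_ofReal (hint t)
      (Filter.Eventually.of_forall fun x => (Real.exp_pos _).le)
  have hIpos : ∀ t, 0 < I t := by
    intro t
    refine (integral_pos_iff_support_of_nonneg (fun x => (Real.exp_pos _).le) (hint t)).mpr ?_
    have : Function.support (fun x : Fin n → ℝ => Real.exp (-φ (x, t))) = Set.univ := by
      ext x; simp [Function.mem_support, (Real.exp_pos _).ne']
    rw [this]
    exact isOpen_univ.measure_pos volume Set.univ_nonempty
  have hmeas : ∀ t, Measurable fun x : Fin n → ℝ => ENNReal.ofReal (Real.exp (-φ (x, t))) := by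
    intro t
    exact ENNReal.measurable_ofReal.comp
      ((Real.continuous_exp.comp (continuous_neg.comp
        (hφcont.comp (Continuous.prodMk_left t)))).measurable)
  have hLC : ∀ t, IsLC fun x : Fin n → ℝ => ENNReal.ofReal (Real.exp (-φ (x, t))) := by
    intro t p q hp hq hpq x y
    refine keyexp hp hq ?_
    have := hφ.2 (Set.mem_univ (x, t)) (Set.mem_univ (y, t)) hp.le hq.le hpq
    have h2 : p • (x, t) + q • (y, t) = (p • x + q • y, t) := by
      rw [Prod.smul_mk, Prod.smul_mk, Prod.mk_add_mk, Convex.combo_self hpq t]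
    rwa [h2] at this
  -- main convexity
  refine ⟨convex_univ, ?_⟩
  intro t₀ _ t₁ _ a b ha hb hab
  rcases eq_or_lt_of_le ha with ha0 | ha0
  · simp only [← ha0, show b = 1 by linarith, zero_smul, one_smul, zero_add, zero_mul, one_mul]
    exact le_refl _
  rcases eq_or_lt_of_le hb with hb0 | hb0
  · simp only [← hb0, show a = 1 by linarith, zero_smul, one_smul, add_zero, zero_mul, one_mul]
    exact le_refl _
  have hJineq : J t₀ ^ a * J t₁ ^ b ≤ J (a • t₀ + b • t₁) := by
    refine pl_dim n ha0 hb0 hab _ _ _ (hmeas t₀) (hmeas t₁) (hmeas _) (hLC t₀) (hLC t₁) ?_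
    intro x y
    refine keyexp ha0 hb0 ?_
    have := hφ.2 (Set.mem_univ (x, t₀)) (Set.mem_univ (y, t₁)) ha hb hab
    have h2 : a • (x, t₀) + b • (y, t₁) = (a • x + b • y, a • t₀ + b • t₁) := by
      rw [Prod.smul_mk, Prod.smul_mk, Prod.mk_add_mk]
    rwa [h2] at this
  have hIineq : I t₀ ^ a * I t₁ ^ b ≤ I (a • t₀ + b • t₁) := by
    have h1 : ENNReal.ofReal (I t₀ ^ a * I t₁ ^ b) ≤ ENNReal.ofReal (I (a • t₀ + b • t₁)) := by
      rw [ENNReal.ofReal_mul (by positivity), ← ENNReal.ofReal_rpow_of_pos (hIpos t₀),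
        ← ENNReal.ofReal_rpow_of_pos (hIpos t₁), hIJ, hIJ, hIJ]
      exact hJineq
    exact (ENNReal.ofReal_le_ofReal_iff (integral_nonneg fun x => (Real.exp_pos _).le)).mp h1
  have hlog := Real.log_le_log
    (mul_pos (Real.rpow_pos_of_pos (hIpos t₀) a) (Real.rpow_pos_of_pos (hIpos t₁) b)) hIineq
  rw [Real.log_mul (Real.rpow_pos_of_pos (hIpos t₀) a).ne'
    (Real.rpow_pos_of_pos (hIpos t₁) b).ne', Real.log_rpow (hIpos t₀),
    Real.log_rpow (hIpos t₁)] at hlog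
  simp only [smul_eq_mul]
  nlinarith [hlog]
end

section
/- The multiplicative Brunn–Minkowski theorem: if K ⊆ ℝⁿ × ℝᵐ is a convex body and K_t denotes the slice {x ∈ ℝⁿ : (x,t) ∈ K}, then t ↦ log(vol_n(K_t)) is a concave function on the projection of K to ℝᵐ (with the convention log 0 = -∞). -/
open MeasureTheory ENNReal Set
open scoped NNReal Pointwise


lemma gm_le_am_ennreal {a b : ℝ} (ha : 0 < a) (hb : 0 < b) (hab : a + b = 1)
    (X Y : ℝ≥0∞) : X ^ a * Y ^ b ≤ ENNReal.ofReal a * X + ENNReal.ofReal b * Y := by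
  rcases eq_or_ne X 0 with rfl | hX0
  · rw [ENNReal.zero_rpow_of_pos ha, zero_mul]; exact zero_le
  rcases eq_or_ne Y 0 with rfl | hY0
  · rw [ENNReal.zero_rpow_of_pos hb, mul_zero]; exact zero_le
  rcases eq_or_ne X ⊤ with rfl | hXt
  · have : ENNReal.ofReal a * ⊤ = ⊤ := by
      rw [ENNReal.mul_top (by simpa using ha)]
    rw [this, top_add]; exact le_top
  rcases eq_or_ne Y ⊤ with rfl | hYt
  · have : ENNReal.ofReal b * ⊤ = ⊤ := by
      rw [ENNReal.mul_top (by simpa using hb)]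
    rw [this, add_top]; exact le_top
  -- lift to NNReal
  lift X to NNReal using hXt
  lift Y to NNReal using hYt
  set wa : NNReal := ⟨a, ha.le⟩ with hwa
  set wb : NNReal := ⟨b, hb.le⟩ with hwb
  have hsum : wa + wb = 1 := by ext; exact hab
  have key := NNReal.geom_mean_le_arith_mean2_weighted wa wb X Y hsum
  have hca : ENNReal.ofReal a = (wa : ℝ≥0∞) := by
    rw [ENNReal.ofReal, Real.toNNReal_of_nonneg ha.le]; rfl
  have hcb : ENNReal.ofReal b = (wb : ℝ≥0∞) := by
    rw [ENNReal.ofReal, Real.toNNReal_of_nonneg hb.le]; rfl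
  have hXa : (X : ℝ≥0∞) ^ a = ((X ^ (wa : ℝ) : ℝ≥0) : ℝ≥0∞) :=
    (ENNReal.coe_rpow_of_nonneg X ha.le).symm
  have hYb : (Y : ℝ≥0∞) ^ b = ((Y ^ (wb : ℝ) : ℝ≥0) : ℝ≥0∞) :=
    (ENNReal.coe_rpow_of_nonneg Y hb.le).symm
  rw [hXa, hYb, hca, hcb, ← ENNReal.coe_mul, ← ENNReal.coe_mul, ← ENNReal.coe_mul,
    ← ENNReal.coe_add, ENNReal.coe_le_coe]
  exact key

lemma compact_bm_one_dim {C D : Set ℝ} (hC : IsCompact C) (hD : IsCompact D)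
    (hCne : C.Nonempty) (hDne : D.Nonempty) :
    volume C + volume D ≤ volume (C + D) := by
  set c := sSup C with hc
  set d := sInf D with hd
  have hcC : c ∈ C := hC.sSup_mem hCne
  have hdD : d ∈ D := hD.sInf_mem hDne
  set U : Set ℝ := C + {d} with hU
  set V : Set ℝ := {c} + D with hV
  have hUV : U ∪ V ⊆ C + D := by
    apply union_subset
    · exact add_subset_add_left (singleton_subset_iff.mpr hdD) |>.trans le_rfl
    · exact add_subset_add_right (singleton_subset_iff.mpr hcC) |>.trans le_rfl
  have hUvol : volume U = volume C := by
    rw [hU, add_singleton]; simp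
  have hVvol : volume V = volume D := by
    rw [hV, singleton_add]; simp
  have hUm : MeasurableSet U := (hC.add isCompact_singleton).measurableSet
  have hVm : MeasurableSet V := (isCompact_singleton.add hD).measurableSet
  have hinter : volume (U ∩ V) = 0 := by
    have : U ∩ V ⊆ {c + d} := by
      rintro x ⟨hxU, hxV⟩
      rw [hU, add_singleton] at hxU
      rw [hV, singleton_add] at hxV
      obtain ⟨u, huC, rfl⟩ := hxU
      obtain ⟨v, hvD, hv⟩ := hxV
      have h1 : u + d ≤ c + d := by
        have := le_csSup hC.bddAbove huC
        linarith
      have h2 : c + d ≤ u + d := by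
        have := csInf_le hD.bddBelow hvD
        simp only [← hv]
        linarith
      simp [le_antisymm h1 h2]
    exact measure_mono_null this (measure_singleton _)
  have := measure_union_add_inter (μ := volume) U hVm
  calc volume C + volume D = volume U + volume V := by rw [hUvol, hVvol]
    _ = volume (U ∪ V) + volume (U ∩ V) := this.symm
    _ = volume (U ∪ V) := by rw [hinter, add_zero]
    _ ≤ volume (C + D) := measure_mono hUV

lemma vol_smul_real (r : ℝ) (s : Set ℝ) : volume (r • s) = ENNReal.ofReal |r| * volume s := by
  rw [Measure.addHaar_smul]; simp


lemma bm_one_dim {A B S : Set ℝ} (hA : MeasurableSet A) (hB : MeasurableSet B)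
    (hAne : A.Nonempty) (hBne : B.Nonempty) (hAf : volume A ≠ ⊤) (hBf : volume B ≠ ⊤)
    {a b : ℝ} (ha : 0 < a) (hb : 0 < b) (hab : a + b = 1)
    (hS : a • A + b • B ⊆ S) :
    ENNReal.ofReal a * volume A + ENNReal.ofReal b * volume B ≤ volume S := by
  obtain ⟨x0, hx0⟩ := hAne
  obtain ⟨y0, hy0⟩ := hBne
  apply ENNReal.le_of_forall_pos_le_add
  intro ε hε hSf
  obtain ⟨C, hCA, hCc, hCv⟩ := hA.exists_isCompact_lt_add (μ := volume) hAf (ε := ε) (by simpa using hε.ne')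
  obtain ⟨D, hDB, hDc, hDv⟩ := hB.exists_isCompact_lt_add (μ := volume) hBf (ε := ε) (by simpa using hε.ne')
  set C' : Set ℝ := insert x0 C with hC'
  set D' : Set ℝ := insert y0 D with hD'
  have hC'c : IsCompact C' := hCc.insert x0
  have hD'c : IsCompact D' := hDc.insert y0
  have hC'A : C' ⊆ A := insert_subset hx0 hCA
  have hD'B : D' ⊆ B := insert_subset hy0 hDB
  have key : ENNReal.ofReal a * volume C' + ENNReal.ofReal b * volume D' ≤ volume S := by
    have h1 : volume (a • C') = ENNReal.ofReal a * volume C' := by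
      rw [vol_smul_real, abs_of_pos ha]
    have h2 : volume (b • D') = ENNReal.ofReal b * volume D' := by
      rw [vol_smul_real, abs_of_pos hb]
    calc ENNReal.ofReal a * volume C' + ENNReal.ofReal b * volume D'
        = volume (a • C') + volume (b • D') := by rw [h1, h2]
      _ ≤ volume (a • C' + b • D') :=
          compact_bm_one_dim (hC'c.smul a) (hD'c.smul b)
            ((insert_nonempty _ _).smul_set) ((insert_nonempty _ _).smul_set)
      _ ≤ volume S := by
          apply measure_mono
          refine subset_trans ?_ hS
          exact add_subset_add (smul_set_mono hC'A) (smul_set_mono hD'B)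
  have hεa : ENNReal.ofReal a * volume A + ENNReal.ofReal b * volume B
      ≤ ENNReal.ofReal a * (volume C' + ε) + ENNReal.ofReal b * (volume D' + ε) := by
    have hCv' : volume A ≤ volume C' + ε :=
      le_trans hCv.le (add_le_add_left (measure_mono (subset_insert _ _)) ε)
    have hDv' : volume B ≤ volume D' + ε :=
      le_trans hDv.le (add_le_add_left (measure_mono (subset_insert _ _)) ε)
    gcongr
  calc ENNReal.ofReal a * volume A + ENNReal.ofReal b * volume B
      ≤ ENNReal.ofReal a * (volume C' + ε) + ENNReal.ofReal b * (volume D' + ε) := hεa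
    _ = (ENNReal.ofReal a * volume C' + ENNReal.ofReal b * volume D')
        + (ENNReal.ofReal a + ENNReal.ofReal b) * ε := by ring
    _ = (ENNReal.ofReal a * volume C' + ENNReal.ofReal b * volume D') + ε := by
        rw [← ENNReal.ofReal_add ha.le hb.le, hab, ENNReal.ofReal_one, one_mul]
    _ ≤ volume S + ε := by gcongr


lemma scale_lintegral_Ioi (φ : ℝ → ℝ≥0∞) (hφ : Measurable φ) {k : ℝ} (hk : 0 < k) :
    ∫⁻ t in Ioi (0:ℝ), φ (k * t) = ENNReal.ofReal k⁻¹ * ∫⁻ u in Ioi (0:ℝ), φ u := by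
  have hmap : Measure.map (fun t : ℝ => k * t) (volume.restrict (Ioi 0))
      = ENNReal.ofReal k⁻¹ • volume.restrict (Ioi (0:ℝ)) := by
    have hpre : (fun t : ℝ => k * t) ⁻¹' (Ioi 0) = Ioi 0 := by
      ext x; simp [mul_pos_iff_of_pos_left, hk]
    calc Measure.map (fun t : ℝ => k * t) (volume.restrict (Ioi 0))
        = Measure.map (fun t : ℝ => k * t)
            (volume.restrict ((fun t : ℝ => k * t) ⁻¹' (Ioi 0))) := by rw [hpre]
      _ = (Measure.map (fun t : ℝ => k * t) volume).restrict (Ioi 0) :=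
          (Measure.restrict_map (measurable_const_mul k) measurableSet_Ioi).symm
      _ = ENNReal.ofReal k⁻¹ • volume.restrict (Ioi (0:ℝ)) := by
          rw [Real.map_volume_mul_left hk.ne', abs_of_pos (inv_pos.mpr hk),
            Measure.restrict_smul]
  calc ∫⁻ t in Ioi (0:ℝ), φ (k * t)
      = ∫⁻ u, φ u ∂(Measure.map (fun t : ℝ => k * t) (volume.restrict (Ioi 0))) :=
        (lintegral_map hφ (measurable_const_mul k)).symm
    _ = ENNReal.ofReal k⁻¹ * ∫⁻ u in Ioi (0:ℝ), φ u := by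
        rw [hmap, lintegral_smul_measure, smul_eq_mul]

lemma pl_one_dim {f g h : ℝ → ℝ≥0∞} (hf : Measurable f) (hg : Measurable g) (hh : Measurable h)
    {M : ℝ≥0∞} (hM : M ≠ ⊤) (hfM : ∀ x, f x ≤ M) (hgM : ∀ x, g x ≤ M)
    (hfs : volume (Function.support f) ≠ ⊤) (hgs : volume (Function.support g) ≠ ⊤)
    {a b : ℝ} (ha : 0 < a) (hb : 0 < b) (hab : a + b = 1)
    (hyp : ∀ x y, f x ^ a * g y ^ b ≤ h (a * x + b * y)) :
    (∫⁻ x, f x) ^ a * (∫⁻ x, g x) ^ b ≤ ∫⁻ z, h z := by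
  classical
  by_cases hIf : ∫⁻ x, f x = 0
  · rw [hIf, ENNReal.zero_rpow_of_pos ha, zero_mul]; exact zero_le
  by_cases hIg : ∫⁻ x, g x = 0
  · rw [hIg, ENNReal.zero_rpow_of_pos hb, mul_zero]; exact zero_le
  have hfx : ∀ x, f x ≠ ⊤ := fun x => ne_top_of_le_ne_top hM (hfM x)
  have hgx : ∀ x, g x ≠ ⊤ := fun x => ne_top_of_le_ne_top hM (hgM x)
  set F := ⨆ x, f x with hF
  set G := ⨆ x, g x with hG
  have hFt : F ≠ ⊤ := ne_top_of_le_ne_top hM (iSup_le hfM)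
  have hGt : G ≠ ⊤ := ne_top_of_le_ne_top hM (iSup_le hgM)
  have hF0 : F ≠ 0 := by
    intro h0
    apply hIf
    have : ∀ x, f x = 0 := fun x => le_antisymm (h0 ▸ le_iSup f x) zero_le
    simp [this]
  have hG0 : G ≠ 0 := by
    intro h0
    apply hIg
    have : ∀ x, g x = 0 := fun x => le_antisymm (h0 ▸ le_iSup g x) zero_le
    simp [this]
  set F' := F.toReal with hF'
  set G' := G.toReal with hG'
  have hF'pos : 0 < F' := ENNReal.toReal_pos hF0 hFt
  have hG'pos : 0 < G' := ENNReal.toReal_pos hG0 hGt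
  set c := F ^ a * G ^ b with hcdef
  have hct : c ≠ ⊤ := ENNReal.mul_ne_top (ENNReal.rpow_ne_top_of_nonneg ha.le hFt)
    (ENNReal.rpow_ne_top_of_nonneg hb.le hGt)
  have hc0 : c ≠ 0 := by
    simp only [hcdef, mul_ne_zero_iff]
    constructor <;> simp [ENNReal.rpow_eq_zero_iff, hF0, hG0, hFt, hGt, ha, hb,
      ha.not_gt, hb.not_gt, asymm]
  set c' := c.toReal with hc'def
  have hc'pos : 0 < c' := ENNReal.toReal_pos hc0 hct
  -- the truncated h
  set h' : ℝ → ℝ≥0∞ := fun z => min (h z) c with hh'def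
  have hh' : Measurable h' := hh.min measurable_const
  have hh'top : ∀ z, h' z ≠ ⊤ := fun z => ne_top_of_le_ne_top hct (min_le_right _ _)
  -- real versions
  set f' : ℝ → ℝ := fun x => (f x).toReal with hf'def
  set g' : ℝ → ℝ := fun y => (g y).toReal with hg'def
  set h'' : ℝ → ℝ := fun z => (h' z).toReal with hh''def
  have hf'm : Measurable f' := hf.ennreal_toReal
  have hg'm : Measurable g' := hg.ennreal_toReal
  have hh''m : Measurable h'' := hh'.ennreal_toReal
  -- layer cake identities
  have Lf : ∫⁻ x, f x = ∫⁻ t in Ioi (0:ℝ), volume {x | t < f' x} := by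
    rw [show (fun x => f x) = fun x => ENNReal.ofReal (f' x) by
      funext x; rw [hf'def]; exact (ENNReal.ofReal_toReal (hfx x)).symm]
    exact lintegral_eq_lintegral_meas_lt volume (ae_of_all _ fun x => ENNReal.toReal_nonneg)
      hf'm.aemeasurable
  have Lg : ∫⁻ y, g y = ∫⁻ t in Ioi (0:ℝ), volume {y | t < g' y} := by
    rw [show (fun y => g y) = fun y => ENNReal.ofReal (g' y) by
      funext y; rw [hg'def]; exact (ENNReal.ofReal_toReal (hgx y)).symm]
    exact lintegral_eq_lintegral_meas_lt volume (ae_of_all _ fun y => ENNReal.toReal_nonneg)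
      hg'm.aemeasurable
  have Lh : ∫⁻ z, h' z = ∫⁻ t in Ioi (0:ℝ), volume {z | t < h'' z} := by
    rw [show (fun z => h' z) = fun z => ENNReal.ofReal (h'' z) by
      funext z; rw [hh''def]; exact (ENNReal.ofReal_toReal (hh'top z)).symm]
    exact lintegral_eq_lintegral_meas_lt volume (ae_of_all _ fun z => ENNReal.toReal_nonneg)
      hh''m.aemeasurable
  -- level set measure functions
  set φf : ℝ → ℝ≥0∞ := fun u => volume {x | u < f' x} with hφf
  set φg : ℝ → ℝ≥0∞ := fun u => volume {y | u < g' y} with hφg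
  have hφf_anti : Antitone φf := fun u v huv =>
    measure_mono fun x hx => lt_of_le_of_lt huv hx
  have hφg_anti : Antitone φg := fun u v huv =>
    measure_mono fun y hy => lt_of_le_of_lt huv hy
  have hφf_m : Measurable φf := hφf_anti.measurable
  have hφg_m : Measurable φg := hφg_anti.measurable
  -- pointwise bounds on f', g'
  have hf'le : ∀ x, f' x ≤ F' := fun x => ENNReal.toReal_mono hFt (le_iSup f x)
  have hg'le : ∀ y, g' y ≤ G' := fun y => ENNReal.toReal_mono hGt (le_iSup g y)
  -- main pointwise claim
  have claim : ∀ t ∈ Ioi (0:ℝ),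
      ENNReal.ofReal a * φf (t * (F' / c')) + ENNReal.ofReal b * φg (t * (G' / c'))
        ≤ volume {z | t < h'' z} := by
    intro t ht
    simp only [mem_Ioi] at ht
    rcases le_or_gt c' t with hge | hlt
    · have e1 : φf (t * (F' / c')) = 0 := by
        have : {x | t * (F' / c') < f' x} = ∅ := by
          ext x
          simp only [mem_setOf_eq, mem_empty_iff_false, iff_false, not_lt]
          calc f' x ≤ F' := hf'le x
            _ = c' * (F' / c') := by field_simp
            _ ≤ t * (F' / c') := by
                apply mul_le_mul_of_nonneg_right hge (by positivity)
        show volume {x | t * (F' / c') < f' x} = 0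
        rw [this, measure_empty]
      have e2 : φg (t * (G' / c')) = 0 := by
        have : {y | t * (G' / c') < g' y} = ∅ := by
          ext y
          simp only [mem_setOf_eq, mem_empty_iff_false, iff_false, not_lt]
          calc g' y ≤ G' := hg'le y
            _ = c' * (G' / c') := by field_simp
            _ ≤ t * (G' / c') := by
                apply mul_le_mul_of_nonneg_right hge (by positivity)
        show volume {y | t * (G' / c') < g' y} = 0
        rw [this, measure_empty]
      rw [e1, e2, mul_zero, mul_zero, add_zero]
      exact zero_le
    · set θf := t * (F' / c') with hθf
      set θg := t * (G' / c') with hθg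
      have hθfpos : 0 < θf := by positivity
      have hθgpos : 0 < θg := by positivity
      set A := {x | θf < f' x} with hA
      set B := {y | θg < g' y} with hB
      have hAm : MeasurableSet A := measurableSet_lt measurable_const hf'm
      have hBm : MeasurableSet B := measurableSet_lt measurable_const hg'm
      have hAne : A.Nonempty := by
        have h1 : ENNReal.ofReal θf < F := by
          rw [ENNReal.ofReal_lt_iff_lt_toReal hθfpos.le hFt]
          calc θf = F' * (t / c') := by rw [hθf]; ring
            _ < F' * 1 := by
                apply mul_lt_mul_of_pos_left _ hF'pos
                rw [div_lt_one hc'pos]; exact hlt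
            _ = F' := mul_one F'
        obtain ⟨x, hx⟩ := lt_iSup_iff.mp h1
        exact ⟨x, (ENNReal.ofReal_lt_iff_lt_toReal hθfpos.le (hfx x)).mp hx⟩
      have hBne : B.Nonempty := by
        have h1 : ENNReal.ofReal θg < G := by
          rw [ENNReal.ofReal_lt_iff_lt_toReal hθgpos.le hGt]
          calc θg = G' * (t / c') := by rw [hθg]; ring
            _ < G' * 1 := by
                apply mul_lt_mul_of_pos_left _ hG'pos
                rw [div_lt_one hc'pos]; exact hlt
            _ = G' := mul_one G'
        obtain ⟨y, hy⟩ := lt_iSup_iff.mp h1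
        exact ⟨y, (ENNReal.ofReal_lt_iff_lt_toReal hθgpos.le (hgx y)).mp hy⟩
      have hAf : volume A ≠ ⊤ := by
        refine ne_top_of_le_ne_top hfs (measure_mono fun x hx => ?_)
        simp only [Function.mem_support]
        intro h0
        rw [hA] at hx
        simp only [mem_setOf_eq, hf'def, h0, ENNReal.toReal_zero] at hx
        exact absurd hx (not_lt.mpr hθfpos.le)
      have hBf : volume B ≠ ⊤ := by
        refine ne_top_of_le_ne_top hgs (measure_mono fun y hy => ?_)
        simp only [Function.mem_support]
        intro h0
        rw [hB] at hy
        simp only [mem_setOf_eq, hg'def, h0, ENNReal.toReal_zero] at hy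
        exact absurd hy (not_lt.mpr hθgpos.le)
      have hincl : a • A + b • B ⊆ {z | t < h'' z} := by
        rintro z ⟨u, hu, v, hv, rfl⟩
        obtain ⟨x, hx, rfl⟩ := hu
        obtain ⟨y, hy, rfl⟩ := hv
        rw [hA] at hx; rw [hB] at hy
        simp only [mem_setOf_eq] at hx hy
        have hfgt : ENNReal.ofReal θf < f x :=
          (ENNReal.ofReal_lt_iff_lt_toReal hθfpos.le (hfx x)).mpr hx
        have hggt : ENNReal.ofReal θg < g y :=
          (ENNReal.ofReal_lt_iff_lt_toReal hθgpos.le (hgx y)).mpr hy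
        have hprod : ENNReal.ofReal t < f x ^ a * g y ^ b := by
          have e : ENNReal.ofReal θf ^ a * ENNReal.ofReal θg ^ b = ENNReal.ofReal t := by
            rw [ENNReal.ofReal_rpow_of_pos hθfpos, ENNReal.ofReal_rpow_of_pos hθgpos,
              ← ENNReal.ofReal_mul (Real.rpow_nonneg hθfpos.le a)]
            congr 1
            have hcc : c' = F' ^ a * G' ^ b := by
              rw [hc'def, hcdef, ENNReal.toReal_mul, ← ENNReal.toReal_rpow,
                ← ENNReal.toReal_rpow, hF', hG']
            calc θf ^ a * θg ^ b
                = ((t / c') * F') ^ a * ((t / c') * G') ^ b := by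
                  rw [hθf, hθg]; ring_nf
              _ = (t / c') ^ a * F' ^ a * ((t / c') ^ b * G' ^ b) := by
                  rw [Real.mul_rpow (by positivity) hF'pos.le,
                    Real.mul_rpow (by positivity) hG'pos.le]
              _ = ((t / c') ^ a * (t / c') ^ b) * (F' ^ a * G' ^ b) := by ring
              _ = (t / c') ^ (a + b) * c' := by
                  rw [← Real.rpow_add (by positivity), hcc]
              _ = t := by rw [hab, Real.rpow_one]; field_simp
          rw [← e]
          exact ENNReal.mul_lt_mul (ENNReal.rpow_lt_rpow hfgt ha)
            (ENNReal.rpow_lt_rpow hggt hb)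
        have hhgt : ENNReal.ofReal t < h (a * x + b * y) :=
          lt_of_lt_of_le hprod (hyp x y)
        have hcgt : ENNReal.ofReal t < c :=
          (ENNReal.ofReal_lt_iff_lt_toReal ht.le hct).mpr hlt
        have : ENNReal.ofReal t < h' (a * x + b * y) := by
          rw [hh'def]; exact lt_min hhgt hcgt
        simp only [mem_setOf_eq, hh''def, smul_eq_mul]
        exact (ENNReal.ofReal_lt_iff_lt_toReal ht.le (hh'top _)).mp this
      exact bm_one_dim hAm hBm hAne hBne hAf hBf ha hb hab hincl
  -- integrate the claim
  have step1 : ∫⁻ t in Ioi (0:ℝ),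
      (ENNReal.ofReal a * φf (t * (F' / c')) + ENNReal.ofReal b * φg (t * (G' / c')))
        ≤ ∫⁻ t in Ioi (0:ℝ), volume {z | t < h'' z} :=
    setLIntegral_mono
      (Antitone.measurable fun u v huv =>
        measure_mono fun z hz => lt_of_le_of_lt huv hz) claim
  -- rescaled integrals
  have hk1 : (0:ℝ) < F' / c' := by positivity
  have hk2 : (0:ℝ) < G' / c' := by positivity
  have sf : ∫⁻ t in Ioi (0:ℝ), φf (t * (F' / c')) = ENNReal.ofReal (c' / F') * ∫⁻ x, f x := by
    have hsc := scale_lintegral_Ioi φf hφf_m hk1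
    simp_rw [mul_comm (F' / c')] at hsc
    rw [hsc, Lf, inv_div]
  have sg : ∫⁻ t in Ioi (0:ℝ), φg (t * (G' / c')) = ENNReal.ofReal (c' / G') * ∫⁻ y, g y := by
    have hsc := scale_lintegral_Ioi φg hφg_m hk2
    simp_rw [mul_comm (G' / c')] at hsc
    rw [hsc, Lg, inv_div]
  have mf : Measurable fun t : ℝ => φf (t * (F' / c')) :=
    hφf_m.comp (measurable_id.mul_const _)
  have mg : Measurable fun t : ℝ => φg (t * (G' / c')) :=
    hφg_m.comp (measurable_id.mul_const _)
  have step2 : ∫⁻ t in Ioi (0:ℝ),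
      (ENNReal.ofReal a * φf (t * (F' / c')) + ENNReal.ofReal b * φg (t * (G' / c')))
      = ENNReal.ofReal a * (ENNReal.ofReal (c' / F') * ∫⁻ x, f x)
        + ENNReal.ofReal b * (ENNReal.ofReal (c' / G') * ∫⁻ y, g y) := by
    rw [lintegral_add_left (mf.const_mul _), lintegral_const_mul _ mf,
      lintegral_const_mul _ mg, sf, sg]
  have hcF : ENNReal.ofReal (c' / F') = c / F := by
    rw [ENNReal.ofReal_div_of_pos hF'pos, hc'def, hF', ENNReal.ofReal_toReal hct,
      ENNReal.ofReal_toReal hFt]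
  have hcG : ENNReal.ofReal (c' / G') = c / G := by
    rw [ENNReal.ofReal_div_of_pos hG'pos, hc'def, hG', ENNReal.ofReal_toReal hct,
      ENNReal.ofReal_toReal hGt]
  have hFa0 : F ^ a ≠ 0 := by
    simp [ENNReal.rpow_eq_zero_iff, hF0, hFt, ha.not_gt, asymm ha]
  have hGb0 : G ^ b ≠ 0 := by
    simp [ENNReal.rpow_eq_zero_iff, hG0, hGt, hb.not_gt, asymm hb]
  have hFat : F ^ a ≠ ⊤ := ENNReal.rpow_ne_top_of_nonneg ha.le hFt
  have hGbt : G ^ b ≠ ⊤ := ENNReal.rpow_ne_top_of_nonneg hb.le hGt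
  have main_eq : c * (((∫⁻ x, f x) / F) ^ a * ((∫⁻ y, g y) / G) ^ b)
      = (∫⁻ x, f x) ^ a * (∫⁻ y, g y) ^ b := by
    rw [ENNReal.div_rpow_of_nonneg _ _ ha.le, ENNReal.div_rpow_of_nonneg _ _ hb.le, hcdef,
      mul_mul_mul_comm, ENNReal.mul_div_cancel hFa0 hFat, ENNReal.mul_div_cancel hGb0 hGbt]
  calc (∫⁻ x, f x) ^ a * (∫⁻ x, g x) ^ b
      = c * (((∫⁻ x, f x) / F) ^ a * ((∫⁻ y, g y) / G) ^ b) := main_eq.symm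
    _ ≤ c * (ENNReal.ofReal a * ((∫⁻ x, f x) / F) + ENNReal.ofReal b * ((∫⁻ y, g y) / G)) :=
        mul_le_mul_right (gm_le_am_ennreal ha hb hab _ _) c
    _ = ENNReal.ofReal a * (ENNReal.ofReal (c' / F') * ∫⁻ x, f x)
        + ENNReal.ofReal b * (ENNReal.ofReal (c' / G') * ∫⁻ y, g y) := by
        rw [hcF, hcG, div_eq_mul_inv, div_eq_mul_inv, div_eq_mul_inv, div_eq_mul_inv]
        ring
    _ = ∫⁻ t in Ioi (0:ℝ),
        (ENNReal.ofReal a * φf (t * (F' / c')) + ENNReal.ofReal b * φg (t * (G' / c'))) :=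
        step2.symm
    _ ≤ ∫⁻ t in Ioi (0:ℝ), volume {z | t < h'' z} := step1
    _ = ∫⁻ z, h' z := Lh.symm
    _ ≤ ∫⁻ z, h z := lintegral_mono fun z => min_le_left _ _


lemma slice_log_concave (n : ℕ) :
    ∀ (E : Type) [NormedAddCommGroup E] [NormedSpace ℝ E]
    (K : Set ((Fin n → ℝ) × E)), Convex ℝ K → IsCompact K →
    ∀ (t s : E), (∃ x, (x, t) ∈ K) → (∃ x, (x, s) ∈ K) →
    ∀ (a b : ℝ), 0 < a → 0 < b → a + b = 1 →
    volume {x : Fin n → ℝ | (x, t) ∈ K} ^ a * volume {x : Fin n → ℝ | (x, s) ∈ K} ^ b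
      ≤ volume {x : Fin n → ℝ | (x, a • t + b • s) ∈ K} := by
  induction n with
  | zero =>
    intro E _ _ K hK hKc t s hts hss a b ha hb hab
    have hone : ∀ (S : Set (Fin 0 → ℝ)), S.Nonempty → volume S = 1 := by
      intro S ⟨y, hy⟩
      have : S = univ := eq_univ_of_forall fun x => by rwa [Subsingleton.elim x y]
      rw [this]
      simp [volume_pi, Measure.pi_univ]
    obtain ⟨x0, hx0⟩ := hts
    obtain ⟨x1, hx1⟩ := hss
    have hcomb : (a • x0 + b • x1, a • t + b • s) ∈ K := by
      have := hK hx0 hx1 ha.le hb.le hab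
      exact this
    rw [hone _ ⟨x0, hx0⟩, hone _ ⟨x1, hx1⟩, hone _ ⟨a • x0 + b • x1, hcomb⟩]
    simp
  | succ n ih =>
    intro E _ _ K hK hKc t s _ _ a b ha hb hab
    -- the measurable equivalence (Fin (n+1) → ℝ) ≃ ℝ × (Fin n → ℝ)
    set e := MeasurableEquiv.piFinSuccAbove (fun _ : Fin (n + 1) => ℝ) 0 with he
    have hτ : ∀ p : ℝ × (Fin n → ℝ), e.symm p = (Fin.cons p.1 p.2 : Fin (n + 1) → ℝ) := by
      intro p
      exact Fin.insertNth_zero' p.1 p.2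
    have hmp : MeasurePreserving e.symm volume volume :=
      (volume_preserving_piFinSuccAbove (fun _ : Fin (n + 1) => ℝ) 0).symm
    -- the transported body
    set K' : Set ((Fin n → ℝ) × (ℝ × E)) :=
      {q | ((Fin.cons q.2.1 q.1 : Fin (n + 1) → ℝ), q.2.2) ∈ K} with hK'def
    -- linearity of cons
    have hconslin : ∀ (α β r1 r2 : ℝ) (y1 y2 : Fin n → ℝ),
        (Fin.cons (α * r1 + β * r2) (α • y1 + β • y2) : Fin (n + 1) → ℝ)
          = α • (Fin.cons r1 y1 : Fin (n + 1) → ℝ) + β • (Fin.cons r2 y2 : Fin (n + 1) → ℝ) := by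
      intro α β r1 r2 y1 y2
      funext j
      refine Fin.cases ?_ ?_ j
      · simp
      · intro i; simp
    -- convexity of K'
    have hK'conv : Convex ℝ K' := by
      intro q1 hq1 q2 hq2 α β hα hβ hαβ
      simp only [hK'def, mem_setOf_eq] at hq1 hq2 ⊢
      have hmem := hK hq1 hq2 hα hβ hαβ
      have : (Fin.cons ((α • q1 + β • q2).2.1) ((α • q1 + β • q2).1) : Fin (n + 1) → ℝ)
          = α • (Fin.cons q1.2.1 q1.1 : Fin (n + 1) → ℝ)
            + β • (Fin.cons q2.2.1 q2.1 : Fin (n + 1) → ℝ) := by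
        have := hconslin α β q1.2.1 q2.2.1 q1.1 q2.1
        exact this
      rw [show ((α • q1 + β • q2).2.2 : E) = α • q1.2.2 + β • q2.2.2 from rfl, this]
      exact hmem
    -- compactness of K'
    have hK'eq : K' = (fun p : (Fin (n + 1) → ℝ) × E =>
        ((Fin.tail p.1 : Fin n → ℝ), (p.1 0, p.2))) '' K := by
      ext q
      simp only [hK'def, mem_setOf_eq, mem_image]
      constructor
      · intro hq
        refine ⟨(Fin.cons q.2.1 q.1, q.2.2), hq, ?_⟩
        simp [Fin.tail_cons]
      · rintro ⟨p, hp, rfl⟩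
        simpa [Fin.cons_self_tail] using hp
    have hK'c : IsCompact K' := by
      rw [hK'eq]
      exact hKc.image
        ((continuous_pi fun j => (continuous_apply j.succ).comp continuous_fst).prodMk
          (((continuous_apply 0).comp continuous_fst).prodMk continuous_snd))
    -- slices of K are measurable
    have hslice_meas : ∀ u : E, MeasurableSet {x : Fin (n + 1) → ℝ | (x, u) ∈ K} := by
      intro u
      exact (hKc.isClosed.preimage (continuous_id.prodMk continuous_const)).measurableSet
    -- the transported slices
    have hT_meas : ∀ u : E,
        MeasurableSet {p : ℝ × (Fin n → ℝ) | ((Fin.cons p.1 p.2 : Fin (n + 1) → ℝ), u) ∈ K} := by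
      intro u
      have : {p : ℝ × (Fin n → ℝ) | ((Fin.cons p.1 p.2 : Fin (n + 1) → ℝ), u) ∈ K}
          = e.symm ⁻¹' {x : Fin (n + 1) → ℝ | (x, u) ∈ K} := by
        ext p; simp [hτ p]
      rw [this]
      exact e.symm.measurable (hslice_meas u)
    -- fiberwise volume functions
    set fn : E → ℝ → ℝ≥0∞ :=
      fun u r => volume {y : Fin n → ℝ | (y, (r, u)) ∈ K'} with hfndef
    have volslice : ∀ u : E, volume {x : Fin (n + 1) → ℝ | (x, u) ∈ K} = ∫⁻ r : ℝ, fn u r := by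
      intro u
      have h1 : volume {x : Fin (n + 1) → ℝ | (x, u) ∈ K}
          = volume (e.symm ⁻¹' {x : Fin (n + 1) → ℝ | (x, u) ∈ K}) :=
        (hmp.measure_preimage (hslice_meas u).nullMeasurableSet).symm
      have h2 : e.symm ⁻¹' {x : Fin (n + 1) → ℝ | (x, u) ∈ K}
          = {p : ℝ × (Fin n → ℝ) | ((Fin.cons p.1 p.2 : Fin (n + 1) → ℝ), u) ∈ K} := by
        ext p; simp [hτ p]
      rw [h1, h2, Measure.volume_eq_prod, Measure.prod_apply (hT_meas u)]
      rfl
    have hfn_meas : ∀ u : E, Measurable (fn u) := by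
      intro u
      exact measurable_measure_prodMk_left (hT_meas u)
    -- uniform bound
    set M : ℝ≥0∞ := volume (Prod.fst '' K') with hMdef
    have hMt : M ≠ ⊤ := ((hK'c.image continuous_fst).measure_lt_top).ne
    have hfM : ∀ u : E, ∀ r, fn u r ≤ M := by
      intro u r
      apply measure_mono
      intro y hy
      exact ⟨(y, (r, u)), hy, rfl⟩
    -- support bound
    have hsupp : ∀ u : E, volume (Function.support (fn u)) ≠ ⊤ := by
      intro u
      have hsub : Function.support (fn u) ⊆ (fun q : (Fin n → ℝ) × (ℝ × E) => q.2.1) '' K' := by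
        intro r hr
        obtain ⟨y, hy⟩ := nonempty_of_measure_ne_zero hr
        exact ⟨(y, (r, u)), hy, rfl⟩
      exact ne_top_of_le_ne_top ((hK'c.image (continuous_fst.comp continuous_snd)).measure_lt_top).ne
        (measure_mono hsub)
    -- Prékopa–Leindler hypothesis via the induction hypothesis
    have hyp : ∀ r1 r2 : ℝ, fn t r1 ^ a * fn s r2 ^ b ≤ fn (a • t + b • s) (a * r1 + b * r2) := by
      intro r1 r2
      rcases eq_empty_or_nonempty {y : Fin n → ℝ | (y, (r1, t)) ∈ K'} with h1 | h1
      · have : fn t r1 = 0 := by rw [hfndef]; simp [h1]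
        rw [this, ENNReal.zero_rpow_of_pos ha, zero_mul]
        exact zero_le
      rcases eq_empty_or_nonempty {y : Fin n → ℝ | (y, (r2, s)) ∈ K'} with h2 | h2
      · have : fn s r2 = 0 := by rw [hfndef]; simp [h2]
        rw [this, ENNReal.zero_rpow_of_pos hb, mul_zero]
        exact zero_le
      have := ih (ℝ × E) K' hK'conv hK'c (r1, t) (r2, s) h1 h2 a b ha hb hab
      have heq : (a • ((r1 : ℝ), t) + b • ((r2 : ℝ), s) : ℝ × E) = (a * r1 + b * r2, a • t + b • s) := by
        simp [Prod.ext_iff, smul_eq_mul]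
      rwa [heq] at this
    rw [volslice t, volslice s, volslice (a • t + b • s)]
    exact pl_one_dim (hfn_meas t) (hfn_meas s) (hfn_meas _) hMt (hfM t) (hfM s)
      (hsupp t) (hsupp s) ha hb hab hyp

/-- **Multiplicative Brunn–Minkowski.** If `K ⊆ ℝⁿ × ℝᵐ` is a convex body (compact convex
with nonempty interior) and `K_t = {x | (x, t) ∈ K}` denotes its vertical slices, then
`t ↦ log vol_n (K_t)` is concave on the projection of `K` to `ℝᵐ` (with `log 0 = -∞`),
expressed multiplicatively: for `t, s` in the projection and `a + b = 1`, `a, b ≥ 0`,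
`vol (K_t) ^ a * vol (K_s) ^ b ≤ vol (K_{a t + b s})`. -/
theorem brunn_minkowski_multiplicative (n m : ℕ) (K : Set ((Fin n → ℝ) × (Fin m → ℝ)))
    (hK : Convex ℝ K) (hKc : IsCompact K) (hKi : (interior K).Nonempty)
    (t s : Fin m → ℝ) (ht : t ∈ Prod.snd '' K) (hs : s ∈ Prod.snd '' K)
    (a b : ℝ) (ha : 0 ≤ a) (hb : 0 ≤ b) (hab : a + b = 1) :
    (volume {x : Fin n → ℝ | (x, t) ∈ K}) ^ a * (volume {x : Fin n → ℝ | (x, s) ∈ K}) ^ b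
      ≤ volume {x : Fin n → ℝ | (x, a • t + b • s) ∈ K} := by
  rcases ha.eq_or_lt with rfl | hapos
  · have hb1 : b = 1 := by linarith
    subst hb1
    simp only [zero_smul, one_smul, zero_add]
    rw [ENNReal.rpow_zero, ENNReal.rpow_one, one_mul]
  rcases hb.eq_or_lt with rfl | hbpos
  · have ha1 : a = 1 := by linarith
    subst ha1
    simp only [zero_smul, one_smul, add_zero]
    rw [ENNReal.rpow_one, ENNReal.rpow_zero, mul_one]
  obtain ⟨⟨x0, t'⟩, hpK, rfl⟩ := ht
  obtain ⟨⟨x1, s'⟩, hqK, rfl⟩ := hs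
  exact slice_log_concave n (Fin m → ℝ) K hK hKc _ _ ⟨x0, hpK⟩ ⟨x1, hqK⟩ a b hapos hbpos hab
end

section
/- Kiselman's example: the function φ(t,z) = |z|² - 2 Re(zt) on ℂ² is plurisubharmonic, but φ̃(t) := -log ∫_{|z|<1} e^{-φ(t,z)} dλ(z) is not plurisubharmonic (indeed not subharmonic) in t. -/
open MeasureTheory Real

/-- Kiselman's function `φ(t, z) = |z|² - 2 Re(z t)` on `ℂ² = ℂ_t × ℂ_z`. -/
noncomputable def kiselmanPhi (p : ℂ × ℂ) : ℝ :=
  Complex.normSq p.2 - 2 * (p.2 * p.1).re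

/-- `φ̃(t) = -log ∫_{|z|<1} e^{-φ(t,z)} dλ(z)`. -/
noncomputable def kiselmanPhiTilde (t : ℂ) : ℝ :=
  -Real.log (∫ z in Metric.ball (0 : ℂ) 1, Real.exp (-kiselmanPhi (t, z)))

/-! ### Auxiliary material -/

/-- The integral `∫ exp (-φ(t,z))` over the unit disc, as a function of `t`. -/
noncomputable def kiselmanI (t : ℂ) : ℝ :=
  ∫ z in Metric.ball (0 : ℂ) 1, Real.exp (-kiselmanPhi (t, z))

lemma kiselmanPhiTilde_eq (t : ℂ) : kiselmanPhiTilde t = -Real.log (kiselmanI t) := rfl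

lemma kiselman_phi_circle (a b : ℂ × ℂ) (c : ℂ) (r : ℝ) :
    ∃ B C D E : ℝ, ∀ θ : ℝ,
      kiselmanPhi (a + (c + (r : ℂ) * Complex.exp (θ * Complex.I)) • b) =
        (kiselmanPhi (a + c • b) + r ^ 2 * Complex.normSq b.2) + B * Real.cos θ +
          C * Real.sin θ + D * (Real.cos θ ^ 2 - Real.sin θ ^ 2) +
          E * (Real.sin θ * Real.cos θ) := by
  refine ⟨r * ((2 * (starRingEnd ℂ) a.2 * b.2 - 2 * (a.2 * b.1 + a.1 * b.2)).re +
          2 * (c * (-2 * b.1 * b.2)).re + 2 * c.re * Complex.normSq b.2),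
        r * (-(2 * (starRingEnd ℂ) a.2 * b.2 - 2 * (a.2 * b.1 + a.1 * b.2)).im -
          2 * (c * (-2 * b.1 * b.2)).im + 2 * c.im * Complex.normSq b.2),
        r ^ 2 * (-2 * b.1 * b.2).re, -2 * r ^ 2 * (-2 * b.1 * b.2).im, fun θ => ?_⟩
  simp only [kiselmanPhi, Prod.fst_add, Prod.snd_add, Prod.smul_fst, Prod.smul_snd,
    smul_eq_mul, Complex.normSq_apply, Complex.add_re, Complex.add_im, Complex.mul_re,
    Complex.mul_im, Complex.sub_re, Complex.sub_im, Complex.neg_re, Complex.neg_im,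
    Complex.ofReal_re, Complex.ofReal_im, Complex.exp_ofReal_mul_I_re,
    Complex.exp_ofReal_mul_I_im, Complex.conj_re, Complex.conj_im, Complex.one_re,
    Complex.one_im, Complex.re_ofNat, Complex.im_ofNat]
  linear_combination (r ^ 2 * (b.2.re ^ 2 + b.2.im ^ 2)) * (Real.sin_sq_add_cos_sq θ)

lemma kiselman_integral_eval (A B C D E : ℝ) :
    (∫ θ in (0:ℝ)..2 * π, (A + B * Real.cos θ + C * Real.sin θ +
        D * (Real.cos θ ^ 2 - Real.sin θ ^ 2) + E * (Real.sin θ * Real.cos θ)))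
      = 2 * π * A := by
  have i0 : IntervalIntegrable (fun _ : ℝ => A) volume 0 (2 * π) :=
    intervalIntegrable_const
  have i1 : IntervalIntegrable (fun θ : ℝ => B * Real.cos θ) volume 0 (2 * π) :=
    (continuous_const.mul Real.continuous_cos).intervalIntegrable _ _
  have i2 : IntervalIntegrable (fun θ : ℝ => C * Real.sin θ) volume 0 (2 * π) :=
    (continuous_const.mul Real.continuous_sin).intervalIntegrable _ _
  have i3 : IntervalIntegrable (fun θ : ℝ =>
      D * (Real.cos θ ^ 2 - Real.sin θ ^ 2)) volume 0 (2 * π) :=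
    (continuous_const.mul ((Real.continuous_cos.pow 2).sub
      (Real.continuous_sin.pow 2))).intervalIntegrable _ _
  have i4 : IntervalIntegrable (fun θ : ℝ =>
      E * (Real.sin θ * Real.cos θ)) volume 0 (2 * π) :=
    (continuous_const.mul (Real.continuous_sin.mul Real.continuous_cos)).intervalIntegrable _ _
  rw [intervalIntegral.integral_add (((i0.add i1).add i2).add i3) i4,
    intervalIntegral.integral_add ((i0.add i1).add i2) i3,
    intervalIntegral.integral_add (i0.add i1) i2,
    intervalIntegral.integral_add i0 i1,
    intervalIntegral.integral_const, intervalIntegral.integral_const_mul,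
    intervalIntegral.integral_const_mul, intervalIntegral.integral_const_mul,
    intervalIntegral.integral_const_mul, integral_cos, integral_sin,
    intervalIntegral.integral_sub (f := fun x => Real.cos x ^ 2) (g := fun x => Real.sin x ^ 2)
      ((Real.continuous_cos.pow 2).intervalIntegrable _ _)
      ((Real.continuous_sin.pow 2).intervalIntegrable _ _),
    integral_cos_sq, integral_sin_sq, integral_sin_mul_cos₁]
  simp [Real.sin_two_pi, Real.cos_two_pi]

lemma kiselman_cont (t : ℂ) :
    Continuous fun z : ℂ => Real.exp (-kiselmanPhi (t, z)) := by
  apply Real.continuous_exp.comp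
  apply Continuous.neg
  exact Complex.continuous_normSq.sub
    (continuous_const.mul (Complex.continuous_re.comp ((continuous_id.mul continuous_const))))

lemma kiselman_integrable (t : ℂ) :
    IntegrableOn (fun z : ℂ => Real.exp (-kiselmanPhi (t, z)))
      (Metric.ball (0 : ℂ) 1) volume := by
  have h := ((kiselman_cont t).continuousOn).integrableOn_compact
    (μ := volume) (isCompact_closedBall (0 : ℂ) 1)
  exact h.mono_set Metric.ball_subset_closedBall

lemma kiselmanI_rot (θ : ℝ) : kiselmanI (Complex.exp (θ * Complex.I)) = kiselmanI 1 := by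
  set u : Circle := Circle.exp θ with hu
  have hcoe : (u : ℂ) = Complex.exp (θ * Complex.I) := Circle.coe_exp θ
  have hmp := (rotation u).measurePreserving
  have hme : MeasurableEmbedding (rotation u) :=
    (rotation u).toHomeomorph.measurableEmbedding
  have hpre : (rotation u) ⁻¹' Metric.ball (0 : ℂ) 1 = Metric.ball (0 : ℂ) 1 := by
    ext z
    simp only [Set.mem_preimage, Metric.mem_ball, Complex.dist_eq, sub_zero, rotation_apply,
      norm_mul, Circle.norm_coe, one_mul]
  have hpt : ∀ z : ℂ, Real.exp (-kiselmanPhi (Complex.exp (θ * Complex.I), z)) =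
      Real.exp (-kiselmanPhi (1, rotation u z)) := by
    intro z
    congr 1
    simp only [kiselmanPhi, rotation_apply, ← hcoe]
    rw [map_mul Complex.normSq]
    simp [Complex.mul_re]
    ring
  have key := hmp.setIntegral_preimage_emb hme
    (fun w : ℂ => Real.exp (-kiselmanPhi (1, w))) (Metric.ball (0 : ℂ) 1)
  rw [hpre] at key
  calc kiselmanI (Complex.exp (θ * Complex.I))
      = ∫ z in Metric.ball (0 : ℂ) 1, Real.exp (-kiselmanPhi (1, rotation u z)) := by
        unfold kiselmanI
        exact setIntegral_congr_fun measurableSet_ball (fun z _ => hpt z)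
    _ = kiselmanI 1 := key

lemma kiselmanI_zero_pos : 0 < kiselmanI 0 := by
  unfold kiselmanI
  rw [setIntegral_pos_iff_support_of_nonneg_ae
    (Filter.Eventually.of_forall fun z => (Real.exp_pos _).le) (kiselman_integrable 0)]
  have : Function.support (fun z : ℂ => Real.exp (-kiselmanPhi (0, z))) = Set.univ := by
    ext z; simp [Function.mem_support, (Real.exp_pos _).ne']
  rw [this, Set.univ_inter]
  exact Metric.measure_ball_pos _ _ one_pos

lemma kiselmanI_lt : kiselmanI 0 < kiselmanI 1 := by
  have h0 : kiselmanI 0 = ∫ z in Metric.ball (0 : ℂ) 1, Real.exp (-Complex.normSq z) := by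
    unfold kiselmanI
    refine setIntegral_congr_fun measurableSet_ball (fun z _ => ?_)
    congr 1
    simp [kiselmanPhi]
  have h1p : kiselmanI 1 =
      ∫ z in Metric.ball (0 : ℂ) 1, Real.exp (-Complex.normSq z + 2 * z.re) := by
    unfold kiselmanI
    refine setIntegral_congr_fun measurableSet_ball (fun z _ => ?_)
    congr 1
    simp [kiselmanPhi]
    ring
  have hplus : IntegrableOn (fun z : ℂ => Real.exp (-Complex.normSq z + 2 * z.re))
      (Metric.ball (0 : ℂ) 1) volume := by
    refine (kiselman_integrable 1).congr_fun (fun z _ => ?_) measurableSet_ball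
    congr 1
    simp [kiselmanPhi]
    ring
  have hminus : IntegrableOn (fun z : ℂ => Real.exp (-Complex.normSq z - 2 * z.re))
      (Metric.ball (0 : ℂ) 1) volume := by
    refine (kiselman_integrable (-1)).congr_fun (fun z _ => ?_) measurableSet_ball
    congr 1
    simp [kiselmanPhi]
    ring
  have hzero : IntegrableOn (fun z : ℂ => Real.exp (-Complex.normSq z))
      (Metric.ball (0 : ℂ) 1) volume := by
    refine (kiselman_integrable 0).congr_fun (fun z _ => ?_) measurableSet_ball
    congr 1
    simp [kiselmanPhi]
  -- symmetrization: the same integral with `-2 z.re`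
  have hneg : (∫ z in Metric.ball (0 : ℂ) 1, Real.exp (-Complex.normSq z + 2 * z.re)) =
      ∫ z in Metric.ball (0 : ℂ) 1, Real.exp (-Complex.normSq z - 2 * z.re) := by
    have hmp := Measure.measurePreserving_neg (volume : Measure ℂ)
    have hme : MeasurableEmbedding (fun z : ℂ => -z) :=
      (Homeomorph.neg ℂ).measurableEmbedding
    have hpre : (fun z : ℂ => -z) ⁻¹' Metric.ball (0 : ℂ) 1 = Metric.ball (0 : ℂ) 1 := by
      ext z; simp [Metric.mem_ball]
    have key := hmp.setIntegral_preimage_emb hme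
      (fun w : ℂ => Real.exp (-Complex.normSq w + 2 * w.re)) (Metric.ball (0 : ℂ) 1)
    rw [hpre] at key
    rw [← key]
    refine setIntegral_congr_fun measurableSet_ball (fun z _ => ?_)
    congr 1
    simp [Complex.normSq_neg]
    ring
  -- pointwise identity for the symmetrized difference
  have hdiff : ∀ z : ℂ, Real.exp (-Complex.normSq z) * (Real.cosh (2 * z.re) - 1) =
      (Real.exp (-Complex.normSq z + 2 * z.re) + Real.exp (-Complex.normSq z - 2 * z.re)) / 2
        - Real.exp (-Complex.normSq z) := by
    intro z
    have ha : Real.exp (-Complex.normSq z + 2 * z.re) =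
        Real.exp (-Complex.normSq z) * Real.exp (2 * z.re) := Real.exp_add _ _
    have hb : Real.exp (-Complex.normSq z - 2 * z.re) =
        Real.exp (-Complex.normSq z) * Real.exp (-(2 * z.re)) := by
      rw [sub_eq_add_neg, Real.exp_add]
    rw [Real.cosh_eq, ha, hb]
    ring
  have hI2 : IntegrableOn (fun z : ℂ =>
      (Real.exp (-Complex.normSq z + 2 * z.re) + Real.exp (-Complex.normSq z - 2 * z.re)) / 2)
      (Metric.ball (0 : ℂ) 1) volume := (hplus.add hminus).div_const 2
  have hint : IntegrableOn
      (fun z : ℂ => Real.exp (-Complex.normSq z) * (Real.cosh (2 * z.re) - 1))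
      (Metric.ball (0 : ℂ) 1) volume := by
    refine (hI2.sub hzero).congr (Filter.Eventually.of_forall fun z => ?_)
    exact (hdiff z).symm
  have hsplit : (∫ z in Metric.ball (0 : ℂ) 1,
        Real.exp (-Complex.normSq z) * (Real.cosh (2 * z.re) - 1)) =
      ((∫ z in Metric.ball (0 : ℂ) 1, Real.exp (-Complex.normSq z + 2 * z.re)) +
        ∫ z in Metric.ball (0 : ℂ) 1, Real.exp (-Complex.normSq z - 2 * z.re)) / 2 -
      ∫ z in Metric.ball (0 : ℂ) 1, Real.exp (-Complex.normSq z) := by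
    rw [setIntegral_congr_fun measurableSet_ball (fun z _ => hdiff z),
      integral_sub hI2 hzero, integral_div, integral_add hplus hminus]
  have hpos : 0 < ∫ z in Metric.ball (0 : ℂ) 1,
      Real.exp (-Complex.normSq z) * (Real.cosh (2 * z.re) - 1) := by
    rw [setIntegral_pos_iff_support_of_nonneg_ae
      (Filter.Eventually.of_forall fun z =>
        mul_nonneg (Real.exp_pos _).le (by linarith [Real.one_le_cosh (2 * z.re)]))
      hint]
    have hsub : Metric.ball ((1:ℂ)/2) (1/4) ⊆
        Function.support (fun z : ℂ =>
          Real.exp (-Complex.normSq z) * (Real.cosh (2 * z.re) - 1)) ∩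
          Metric.ball (0 : ℂ) 1 := by
      intro z hz
      rw [Metric.mem_ball, Complex.dist_eq] at hz
      have hre : |z.re - 1/2| < 1/4 := by
        have h1 : |(z - 1/2).re| ≤ ‖z - 1/2‖ := Complex.abs_re_le_norm _
        have h2 : (z - 1/2 : ℂ).re = z.re - 1/2 := by simp
        rw [h2] at h1
        linarith
      have hre' : (0:ℝ) < z.re := by
        have := abs_lt.1 hre
        linarith [this.1]
      constructor
      · have hco : 1 < Real.cosh (2 * z.re) :=
          Real.one_lt_cosh.2 (by positivity)
        exact ne_of_gt (mul_pos (Real.exp_pos _) (by linarith))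
      · rw [Metric.mem_ball, Complex.dist_eq, sub_zero]
        calc ‖z‖ = ‖(z - 1/2) + 1/2‖ := by ring_nf
          _ ≤ ‖z - 1/2‖ + ‖(1/2 : ℂ)‖ := norm_add_le _ _
          _ < 1/4 + 1/2 := by
              have : ‖(1/2 : ℂ)‖ = 1/2 := by
                rw [show ((1:ℂ)/2) = ((1/2 : ℝ) : ℂ) by norm_num, Complex.norm_real]
                norm_num
              rw [this]
              linarith
          _ < 1 := by norm_num
    calc (0 : ENNReal) < volume (Metric.ball ((1:ℂ)/2) (1/4)) :=
          Metric.measure_ball_pos _ _ (by norm_num)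
      _ ≤ _ := measure_mono hsub
  linarith [hpos, hsplit, hneg, h1p.symm, h0.symm]

/-- **Kiselman's example.** The function `φ(t,z) = |z|² - 2Re(zt)` is plurisubharmonic on `ℂ²`
(it satisfies the sub-mean value inequality on circles along every complex line), but
`φ̃(t) = -log ∫_{|z|<1} e^{-φ(t,z)} dλ(z)` is not subharmonic in `t`: it violates the
sub-mean value inequality on some circle. -/
theorem kiselman_example :
    (∀ a b : ℂ × ℂ, ∀ c : ℂ, ∀ r : ℝ, 0 ≤ r →
      kiselmanPhi (a + c • b) ≤ (2 * π)⁻¹ *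
        ∫ θ in (0:ℝ)..2 * π, kiselmanPhi (a + (c + (r : ℂ) * Complex.exp (θ * Complex.I)) • b))
    ∧ ∃ (c : ℂ) (r : ℝ), 0 < r ∧
      (2 * π)⁻¹ * (∫ θ in (0:ℝ)..2 * π, kiselmanPhiTilde (c + (r : ℂ) * Complex.exp (θ * Complex.I)))
        < kiselmanPhiTilde c := by
  constructor
  · intro a b c r _
    obtain ⟨B, C, D, E, h⟩ := kiselman_phi_circle a b c r
    rw [intervalIntegral.integral_congr (fun θ _ => h θ), kiselman_integral_eval]
    have hπ : (0:ℝ) < 2 * π := by positivity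
    rw [inv_mul_cancel_left₀ hπ.ne']
    nlinarith [Complex.normSq_nonneg b.2, sq_nonneg r]
  · refine ⟨0, 1, one_pos, ?_⟩
    have hconst : ∀ θ : ℝ, θ ∈ Set.uIcc (0:ℝ) (2 * π) →
        kiselmanPhiTilde ((0:ℂ) + (1:ℝ) * Complex.exp (θ * Complex.I)) =
          -Real.log (kiselmanI 1) := by
      intro θ _
      rw [show ((0:ℂ) + ((1:ℝ):ℂ) * Complex.exp (θ * Complex.I)) =
        Complex.exp (θ * Complex.I) by push_cast; ring, kiselmanPhiTilde_eq, kiselmanI_rot]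
    rw [intervalIntegral.integral_congr hconst, intervalIntegral.integral_const,
      kiselmanPhiTilde_eq]
    have hπ : (0:ℝ) < 2 * π := by positivity
    rw [smul_eq_mul, sub_zero, inv_mul_cancel_left₀ hπ.ne']
    have := Real.log_lt_log kiselmanI_zero_pos kiselmanI_lt
    linarith
end
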